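/- arXiv:1712.07414 — 5 statements merged into one kernel-verified Lean document; each statement's English description precedes it below -/
import Mathlib

section
/- Let Q be a closed form in the wide sense on L²(X,m) with resolvent G₁, let A ⊆ X be measurable, and let P_A be the orthogonal projection from the Hilbert space (D(Q), ⟨·,·⟩_Q) onto the closed subspace D(Q_A) = {u ∈ D(Q) : u·1_{X∖A} = 0}. Then the resolvent G₁^A of the restricted form Q_A satisfies G₁^A f = P_A G₁ f for all f ∈ L²(X,m), where G₁^A f := G₁^A(1_A f). -/
open MeasureTheory Filter Topology RealInnerProductSpace

noncomputable section

variable {X : Type*} [MeasurableSpace X]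

open scoped Classical in
/-- Multiplication by the indicator function of a set `A`, as a map on `L²`. -/
def indMul {μ : Measure X} (A : Set X) (f : Lp ℝ 2 μ) : Lp ℝ 2 μ :=
  if h : MeasurableSet A then ((Lp.memLp f).indicator h).toLp else 0

/-- A closed (nonnegative, symmetric) quadratic form in the wide sense on `L²(X,m)`:
its domain is a not necessarily dense subspace which is complete in the form norm. -/
structure WideForm (μ : Measure X) where
  dom : Submodule ℝ (Lp ℝ 2 μ)
  Q : Lp ℝ 2 μ → Lp ℝ 2 μ → ℝ
  symm : ∀ u v, Q u v = Q v u
  add_left : ∀ u v w, Q (u + v) w = Q u w + Q v w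
  smul_left : ∀ (c : ℝ) u v, Q (c • u) v = c * Q u v
  nonneg : ∀ u, 0 ≤ Q u u
  closed : ∀ f : ℕ → Lp ℝ 2 μ, (∀ n, f n ∈ dom) →
    (∀ ε > 0, ∃ N, ∀ m ≥ N, ∀ n ≥ N,
      Q (f m - f n) (f m - f n) + ‖f m - f n‖ ^ 2 < ε) →
    ∃ g ∈ dom, Tendsto (fun n => Q (f n - g) (f n - g) + ‖f n - g‖ ^ 2) atTop (nhds 0)

/-- `G` is the resolvent family of the closed form `T`. -/
def WideForm.IsResolvent {μ : Measure X} (T : WideForm μ)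
    (G : ℝ → Lp ℝ 2 μ →L[ℝ] Lp ℝ 2 μ) : Prop :=
  ∀ α > 0, ∀ u, G α u ∈ T.dom ∧
    ∀ v ∈ T.dom, T.Q (G α u) v + α * ⟪G α u, v⟫ = ⟪u, v⟫

/-- `T` is positivity preserving. -/
def WideForm.PosPres {μ : Measure X} (T : WideForm μ) : Prop :=
  ∀ u ∈ T.dom, |u| ∈ T.dom ∧ T.Q |u| |u| ≤ T.Q u u

/-- the resolvent of the restricted form is the `‖·‖_Q`-orthogonal projection
of the resolvent: `G₁^A f = P_A G₁ f`. -/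
theorem resolvent_of_restriction_eq_projection {μ : Measure X} (T : WideForm μ)
    (G : ℝ → Lp ℝ 2 μ →L[ℝ] Lp ℝ 2 μ) (hG : T.IsResolvent G)
    (A : Set X) (hA : MeasurableSet A)
    (T' : WideForm μ)
    (hdom : (T'.dom : Set (Lp ℝ 2 μ)) = {u | u ∈ T.dom ∧ indMul Aᶜ u = 0})
    (hQ : ∀ u v, T'.Q u v = T.Q u v)
    (G' : ℝ → Lp ℝ 2 μ →L[ℝ] Lp ℝ 2 μ) (hG' : T'.IsResolvent G')
    (P : Lp ℝ 2 μ → Lp ℝ 2 μ)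
    (hP : ∀ g ∈ T.dom, P g ∈ T'.dom ∧
      ∀ v ∈ T'.dom, T.Q (g - P g) v + ⟪g - P g, v⟫ = (0 : ℝ)) :
    ∀ f : Lp ℝ 2 μ, G' 1 f = P (G 1 f) := by
  intro f
  have hsub : ∀ u, u ∈ T'.dom → u ∈ T.dom := by
    intro u hu
    have : u ∈ ({u | u ∈ T.dom ∧ indMul Aᶜ u = 0} : Set (Lp ℝ 2 μ)) := hdom ▸ hu
    exact this.1
  obtain ⟨hG1mem, hG1eq⟩ := hG 1 one_pos f
  obtain ⟨hG'mem, hG'eq⟩ := hG' 1 one_pos f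
  obtain ⟨hPmem, hPeq⟩ := hP (G 1 f) hG1mem
  set w : Lp ℝ 2 μ := G' 1 f - P (G 1 f) with hw
  have hwmem : w ∈ T'.dom := Submodule.sub_mem _ hG'mem hPmem
  have hQsub : ∀ u v x, T.Q (u - v) x = T.Q u x - T.Q v x := by
    intro u v x
    have h1 : T.Q (u - v + v) x = T.Q (u - v) x + T.Q v x := T.add_left _ _ _
    rw [sub_add_cancel] at h1
    linarith
  -- the G' equation at w
  have e1 : T.Q (G' 1 f) w + ⟪G' 1 f, w⟫ = ⟪f, w⟫ := by
    have := hG'eq w hwmem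
    rw [hQ] at this
    linarith
  -- projection equation at w
  have e2 : T.Q (P (G 1 f)) w + ⟪P (G 1 f), w⟫ = ⟪f, w⟫ := by
    have h0 := hPeq w hwmem
    rw [hQsub, inner_sub_left] at h0
    have h1 := hG1eq w (hsub w hwmem)
    linarith
  have e3 : T.Q w w + ⟪w, w⟫ = 0 := by
    rw [hw, hQsub, inner_sub_left]
    linarith
  have h4 : (0:ℝ) ≤ ⟪w, w⟫ := real_inner_self_nonneg
  have h5 : ⟪w, w⟫ = (0:ℝ) := le_antisymm (by linarith [T.nonneg w]) h4
  have : w = 0 := by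
    have := inner_self_eq_zero.mp h5
    exact this
  exact sub_eq_zero.mp this
end
end

section
/- Let Q be a closed form in the wide sense on L²(X,m) with compact resolvent and A ⊆ X measurable. Then the restricted form Q_A, defined on D(Q_A) = {u ∈ D(Q) : u·1_{X∖A} = 0 a.e.}, also has compact resolvent. -/
open MeasureTheory Filter Topology RealInnerProductSpace

noncomputable section

variable {X : Type*} [MeasurableSpace X]

/-- If every sequence in `s` has a Cauchy subsequence, then `s` is totally bounded. -/
lemma totallyBounded_of_cauchy_subseq {α : Type*} [UniformSpace α] {s : Set α}
    (h : ∀ u : ℕ → α, (∀ n, u n ∈ s) → ∃ φ : ℕ → ℕ, StrictMono φ ∧ CauchySeq (u ∘ φ)) :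
    TotallyBounded s := by
  intro V V_in
  by_contra hc
  obtain ⟨u, u_in, hu⟩ : ∃ u : ℕ → α, (∀ n, u n ∈ s) ∧ ∀ n m, m < n → (u n, u m) ∉ V := by
    have h' : ∀ t : Set α, t.Finite → ∃ x, x ∈ s ∧ ∀ y ∈ t, (x, y) ∉ V := by
      intro t ht
      by_contra hx
      push_neg at hx
      exact hc ⟨t, ht, fun x hxs => by
        obtain ⟨y, hy, hxy⟩ := hx x hxs
        exact Set.mem_iUnion₂.2 ⟨y, hy, hxy⟩⟩
    simpa only [forall_and, Set.forall_mem_image, not_and, Set.mem_Iio] using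
      Set.seq_of_forall_finite_exists h'
  obtain ⟨φ, hφ, hcs⟩ := h u u_in
  obtain ⟨N, hN⟩ : ∃ N, ∀ p q, p ≥ N → q ≥ N → (u (φ p), u (φ q)) ∈ V :=
    hcs.mem_entourage V_in
  exact hu (φ <| N + 1) (φ N) (hφ <| Nat.lt_add_one N) (hN (N + 1) N N.le_succ le_rfl)

lemma WideForm.sub_left' {μ : Measure X} (T : WideForm μ) (a b c : Lp ℝ 2 μ) :
    T.Q (a - b) c = T.Q a c - T.Q b c := by
  rw [sub_eq_add_neg, T.add_left, ← neg_one_smul ℝ b, T.smul_left]; ring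

/-- Key inequality: if `d` and `e` satisfy the resolvent identities against `d` and `e`
respectively, with the same data `u`, then `α‖d‖² ≤ ‖u‖‖e‖`. -/
lemma WideForm.key_est {μ : Measure X} (T : WideForm μ) {α : ℝ} (hα : 0 < α)
    (u d e : Lp ℝ 2 μ)
    (h1 : T.Q d d + α * ⟪d, d⟫ = ⟪u, d⟫)
    (h2 : T.Q e d + α * ⟪e, d⟫ = ⟪u, d⟫)
    (h3 : T.Q e e + α * ⟪e, e⟫ = ⟪u, e⟫) :
    α * ‖d‖ ^ 2 ≤ ‖u‖ * ‖e‖ := by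
  set B : Lp ℝ 2 μ → Lp ℝ 2 μ → ℝ := fun a b => T.Q a b + α * ⟪a, b⟫ with hB
  have Bsymm : ∀ a b, B a b = B b a := fun a b => by
    simp only [hB, T.symm a b, real_inner_comm a b]
  have Bsub_left : ∀ a b c, B (a - b) c = B a c - B b c := fun a b c => by
    simp only [hB, T.sub_left', inner_sub_left]; ring
  have Bsub_right : ∀ a b c, B a (b - c) = B a b - B a c := fun a b c => by
    rw [Bsymm, Bsub_left, Bsymm a b, Bsymm a c]
  have Bnonneg : ∀ a, 0 ≤ B a a := fun a => by
    have := T.nonneg a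
    have h2 : (0:ℝ) ≤ ⟪a, a⟫ := real_inner_self_nonneg
    simp only [hB]
    positivity
  have key0 : B d d ≤ B e e := by
    have hexp : B (e - d) (e - d) = B e e - B d d := by
      rw [Bsub_left, Bsub_right, Bsub_right, Bsymm d e]
      have : B e d = B d d := h2.trans h1.symm
      rw [this]; ring
    have := Bnonneg (e - d)
    linarith [hexp ▸ this]
  have hdd : α * ‖d‖ ^ 2 ≤ B d d := by
    have := T.nonneg d
    simp only [hB, real_inner_self_eq_norm_sq]
    linarith
  have hee : B e e ≤ ‖u‖ * ‖e‖ := h3.le.trans (real_inner_le_norm u e)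
  linarith

/-- the restriction of a closed form with compact resolvent has compact
resolvent. -/
theorem restriction_compact_resolvent {μ : Measure X} (T : WideForm μ)
    (G : ℝ → Lp ℝ 2 μ →L[ℝ] Lp ℝ 2 μ) (hG : T.IsResolvent G)
    (hcpt : ∀ α > 0, IsCompactOperator (G α))
    (A : Set X) (hA : MeasurableSet A)
    (T' : WideForm μ)
    (hdom : (T'.dom : Set (Lp ℝ 2 μ)) = {u | u ∈ T.dom ∧ indMul Aᶜ u = 0})
    (hQ : ∀ u v, T'.Q u v = T.Q u v)
    (G' : ℝ → Lp ℝ 2 μ →L[ℝ] Lp ℝ 2 μ) (hG' : T'.IsResolvent G') :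
    ∀ α > 0, IsCompactOperator (G' α) := by
  intro α hα
  have hsub : ∀ v, v ∈ T'.dom → v ∈ T.dom := by
    intro v hv
    have hv' : v ∈ (T'.dom : Set (Lp ℝ 2 μ)) := hv
    rw [hdom] at hv'
    exact hv'.1
  -- the key estimate for a single `u`
  have est : ∀ u : Lp ℝ 2 μ, α * ‖G' α u‖ ^ 2 ≤ ‖u‖ * ‖G α u‖ := by
    intro u
    obtain ⟨hd, hd2⟩ := hG' α hα u
    obtain ⟨he, he2⟩ := hG α hα u
    refine T.key_est hα u (G' α u) (G α u) ?_ ?_ ?_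
    · have := hd2 (G' α u) hd
      rwa [hQ] at this
    · exact he2 (G' α u) (hsub _ hd)
    · exact he2 (G α u) he
  -- reduce to compactness of the closure of the image of the closed unit ball
  have h1 := isCompactOperator_iff_isCompact_closure_image_closedBall
    (𝕜₁ := ℝ) ((G' α).toLinearMap) one_pos
  rw [ContinuousLinearMap.coe_coe] at h1
  rw [h1]
  refine isCompact_iff_totallyBounded_isComplete.2
    ⟨(totallyBounded_of_cauchy_subseq ?_).closure, isClosed_closure.isComplete⟩
  intro b hb
  choose u hu hub using fun n => hb n
  obtain ⟨K, hK, hKs⟩ := IsCompactOperator.image_closedBall_subset_compact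
    (𝕜₁ := ℝ) (f := (G α).toLinearMap) (hcpt α hα) 1
  have hwK : ∀ n, G α (u n) ∈ K := fun n => hKs ⟨u n, hu n, rfl⟩
  obtain ⟨a, -, φ, hφ, hconv⟩ := hK.tendsto_subseq hwK
  refine ⟨φ, hφ, ?_⟩
  have hw : CauchySeq (fun n => G α (u (φ n))) := hconv.cauchySeq
  rw [Metric.cauchySeq_iff] at hw ⊢
  intro ε hε
  obtain ⟨N, hN⟩ := hw (α * ε ^ 2 / 2) (by positivity)
  refine ⟨N, fun m hm n hn => ?_⟩
  have hd : dist ((b ∘ φ) m) ((b ∘ φ) n) = ‖G' α (u (φ m)) - G' α (u (φ n))‖ := by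
    simp only [Function.comp, ← hub, dist_eq_norm]
  have hest := est (u (φ m) - u (φ n))
  rw [map_sub, map_sub] at hest
  have hub2 : ‖u (φ m) - u (φ n)‖ ≤ 2 := by
    have h1 : ‖u (φ m)‖ ≤ 1 := mem_closedBall_zero_iff.1 (hu (φ m))
    have h2 : ‖u (φ n)‖ ≤ 1 := mem_closedBall_zero_iff.1 (hu (φ n))
    calc ‖u (φ m) - u (φ n)‖ ≤ ‖u (φ m)‖ + ‖u (φ n)‖ := norm_sub_le _ _
      _ ≤ 2 := by linarith
  have hwd : ‖G α (u (φ m)) - G α (u (φ n))‖ < α * ε ^ 2 / 2 := by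
    rw [← dist_eq_norm]
    exact hN m hm n hn
  have hx : ‖G' α (u (φ m)) - G' α (u (φ n))‖ ^ 2 < ε ^ 2 := by
    nlinarith [norm_nonneg (G α (u (φ m)) - G α (u (φ n))),
      norm_nonneg (G' α (u (φ m)) - G' α (u (φ n))), norm_nonneg (u (φ m) - u (φ n))]
  rw [hd]
  exact lt_of_pow_lt_pow_left₀ 2 hε.le hx
end
end

section
/- Let Q be a positivity preserving form in the wide sense on L²(X,m), A ⊆ X measurable, and P_A the orthogonal projection from (D(Q), ⟨·,·⟩_Q) onto D(Q_A) = {u ∈ D(Q) : u·1_{X∖A} = 0}. Then for every f ∈ D(Q) with f ≥ 0 a.e., we have P_A f ≤ f almost everywhere. -/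
open MeasureTheory Filter Topology RealInnerProductSpace

noncomputable section

variable {X : Type*} [MeasurableSpace X]

theorem indMul_eq_zero_aux {μ : Measure X} {A : Set X} (hA : MeasurableSet A)
    (g : Lp ℝ 2 μ) : indMul A g = 0 ↔ A.indicator ⇑g =ᵐ[μ] 0 := by
  rw [indMul, dif_pos hA]
  constructor
  · intro h
    have h1 : ⇑(((Lp.memLp g).indicator hA).toLp) =ᵐ[μ] A.indicator ⇑g :=
      MemLp.coeFn_toLp _
    rw [h] at h1
    exact h1.symm.trans (Lp.coeFn_zero _ _ _)
  · intro h
    apply Lp.ext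
    exact (MemLp.coeFn_toLp _).trans (h.trans (Lp.coeFn_zero _ _ _).symm)

/-- for a positivity preserving form, the form-orthogonal projection onto
the restricted domain satisfies `P_A f ≤ f` for nonnegative `f ∈ D(Q)`. -/
theorem projection_le_of_nonneg {μ : Measure X} (T : WideForm μ) (hpp : T.PosPres)
    (A : Set X) (hA : MeasurableSet A)
    (T' : WideForm μ)
    (hdom : (T'.dom : Set (Lp ℝ 2 μ)) = {u | u ∈ T.dom ∧ indMul Aᶜ u = 0})
    (hQ : ∀ u v, T'.Q u v = T.Q u v)
    (P : Lp ℝ 2 μ → Lp ℝ 2 μ)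
    (hP : ∀ g ∈ T.dom, P g ∈ T'.dom ∧
      ∀ v ∈ T'.dom, T.Q (g - P g) v + ⟪g - P g, v⟫ = (0 : ℝ)) :
    ∀ f ∈ T.dom, 0 ≤ f → P f ≤ f := by
  intro f hf hf0
  obtain ⟨hPfmem, horth⟩ := hP f hf
  have hPfmem' : P f ∈ T.dom ∧ indMul Aᶜ (P f) = 0 := by
    have h := hPfmem
    rw [← SetLike.mem_coe, hdom] at h
    exact h
  set u : Lp ℝ 2 μ := f - P f with hu
  have hudom : u ∈ T.dom := T.dom.sub_mem hf hPfmem'.1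
  obtain ⟨habs_mem, habs_le⟩ := hpp u hudom
  set v : Lp ℝ 2 μ := (1/2 : ℝ) • (u - |u|) with hv
  clear_value u v
  have hvTdom : v ∈ T.dom := by
    rw [hv]; exact T.dom.smul_mem _ (T.dom.sub_mem hudom habs_mem)
  -- nonnegativity of f a.e.
  have hf0' : ∀ᵐ x ∂μ, 0 ≤ f x := by
    have h := (Lp.coeFn_le (0 : Lp ℝ 2 μ) f).mpr hf0
    filter_upwards [h, Lp.coeFn_zero ℝ 2 μ] with x h1 h2
    rw [h2] at h1; exact h1
  -- P f = 0 a.e. on Aᶜ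
  have hPf0 : ∀ᵐ x ∂μ, x ∈ Aᶜ → P f x = 0 := by
    have h := (indMul_eq_zero_aux hA.compl (P f)).mp hPfmem'.2
    filter_upwards [h] with x hx hxA
    rw [Set.indicator_of_mem hxA] at hx
    exact hx
  -- v ∈ T'.dom
  have hvdom : v ∈ T'.dom := by
    rw [← SetLike.mem_coe, hdom]
    refine ⟨hvTdom, ?_⟩
    rw [indMul_eq_zero_aux hA.compl]
    filter_upwards [hf0', hPf0, Lp.coeFn_smul ((1/2 : ℝ)) (u - |u|),
      Lp.coeFn_sub u |u|, Lp.coeFn_abs u, Lp.coeFn_sub f (P f)]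
      with x h0 hpf hsm hsb hab hsu
    by_cases hx : x ∈ Aᶜ
    · have hsu' : (u : X → ℝ) x = f x - P f x := by rw [hu]; exact hsu
      have hux : (u : X → ℝ) x = f x := by rw [hsu', hpf hx, sub_zero]
      have habx : (|u| : Lp ℝ 2 μ) x = (u : X → ℝ) x := by
        rw [hab, hux]; exact abs_of_nonneg h0
      have hvx : (v : X → ℝ) x = 0 := by
        rw [hv]
        have h1 : (((1/2 : ℝ) • (u - |u|) : Lp ℝ 2 μ) : X → ℝ) x
            = (1/2 : ℝ) * ((u - |u| : Lp ℝ 2 μ) : X → ℝ) x := hsm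
        rw [h1, hsb]
        simp only [Pi.sub_apply]
        rw [habx, sub_self, mul_zero]
      simp only [Pi.zero_apply]
      rw [Set.indicator_of_mem hx]
      exact hvx
    · simp only [Pi.zero_apply]
      rw [Set.indicator_of_notMem hx]
  -- orthogonality: Q(u,v) + ⟨u,v⟩ = 0
  have horthv : T.Q u v + ⟪u, v⟫ = 0 := horth v hvdom
  -- bilinearity helpers
  have hQsub_right : ∀ a b c : Lp ℝ 2 μ, T.Q a (b - c) = T.Q a b - T.Q a c := by
    intro a b c
    rw [T.symm a (b - c), sub_eq_add_neg, T.add_left, T.symm b a,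
      show (-c : Lp ℝ 2 μ) = (-1 : ℝ) • c by simp, T.smul_left, T.symm c a]
    ring
  have hQsmul_right : ∀ (r : ℝ) (a b : Lp ℝ 2 μ), T.Q a (r • b) = r * T.Q a b := by
    intro r a b; rw [T.symm, T.smul_left, T.symm]
  have hQsub_left : ∀ a b c : Lp ℝ 2 μ, T.Q (a - b) c = T.Q a c - T.Q b c := by
    intro a b c; rw [T.symm, hQsub_right, T.symm c a, T.symm c b]
  -- key computation
  have hnormabs : ⟪|u|, |u|⟫ = ⟪u, u⟫ := by
    rw [real_inner_self_eq_norm_sq, real_inner_self_eq_norm_sq, norm_abs_eq_norm]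
  have hsymm_inner : ⟪u, |u|⟫ = ⟪|u|, u⟫ := real_inner_comm _ _
  have hQuv : T.Q u v = (1/2 : ℝ) * (T.Q u u - T.Q u |u|) := by
    rw [hv, hQsmul_right, hQsub_right]
  have hiuv : ⟪u, v⟫ = (1/2 : ℝ) * (⟪u, u⟫ - ⟪u, |u|⟫) := by
    rw [hv, real_inner_smul_right, inner_sub_right]
  have hkey : T.Q u |u| + ⟪u, |u|⟫ = T.Q u u + ⟪u, u⟫ := by
    have h := horthv
    rw [hQuv, hiuv] at h
    linarith
  have hQvv : T.Q v v = (1/4 : ℝ) * (T.Q u u - 2 * T.Q u |u| + T.Q |u| |u|) := by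
    rw [hv, T.smul_left, hQsmul_right, hQsub_left, hQsub_right, hQsub_right,
      T.symm |u| u]
    ring
  have hivv : ⟪v, v⟫ = (1/4 : ℝ) * (⟪u, u⟫ - 2 * ⟪u, |u|⟫ + ⟪|u|, |u|⟫) := by
    rw [hv, real_inner_smul_left, real_inner_smul_right, inner_sub_left,
      inner_sub_right, inner_sub_right, hsymm_inner]
    ring
  have hle : T.Q v v + ⟪v, v⟫ ≤ 0 := by
    rw [hQvv, hivv]
    nlinarith [hkey, habs_le, hnormabs]
  have hvv0 : ⟪v, v⟫ = 0 := by
    have h1 := T.nonneg v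
    have h2 : (0:ℝ) ≤ ⟪v, v⟫ := real_inner_self_nonneg
    linarith
  have hv0 : v = 0 := inner_self_eq_zero.mp hvv0
  have husub : u - |u| = 0 := by
    have h2 : (1/2 : ℝ) • (u - |u|) = 0 := by rw [← hv]; exact hv0
    rcases smul_eq_zero.mp h2 with h | h
    · norm_num at h
    · exact h
  have huabs : u = |u| := sub_eq_zero.mp husub
  -- conclude
  rw [← Lp.coeFn_le]
  have h3 : (u : X → ℝ) =ᵐ[μ] fun x => |u x| := by
    have h := Lp.coeFn_abs u
    rw [← huabs] at h
    exact h
  filter_upwards [h3, Lp.coeFn_sub f (P f)] with x h1 h2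
  have h2' : (u : X → ℝ) x = f x - P f x := by rw [hu]; exact h2
  have : 0 ≤ (u : X → ℝ) x := by rw [h1]; exact abs_nonneg _
  linarith [h2' ▸ this]
end
end

section
/- Let Q be a positivity preserving form in the wide sense with resolvent G_α. A measurable set A ⊆ X is Q-invariant (i.e., G_α(1_A f) = 1_A G_α f for all f ∈ L²(X,m), α > 0) if and only if for every f ∈ D(Q) one has 1_A f ∈ D(Q) and Q(f) = Q(1_A f) + Q(1_{X∖A} f). -/
open MeasureTheory Filter Topology RealInnerProductSpace

noncomputable section

variable {X : Type*} [MeasurableSpace X]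

/-- `A` is invariant for the resolvent family `G`. -/
def ResInvariant {μ : Measure X} (G : ℝ → Lp ℝ 2 μ →L[ℝ] Lp ℝ 2 μ) (A : Set X) : Prop :=
  MeasurableSet A ∧ ∀ α > 0, ∀ f, G α (indMul A f) = indMul A (G α f)

namespace InvAux

variable {μ : Measure X} (T : WideForm μ)

lemma Q_add_right (u v w : Lp ℝ 2 μ) : T.Q u (v + w) = T.Q u v + T.Q u w := by
  rw [T.symm, T.add_left, T.symm v u, T.symm w u]

lemma Q_smul_right (c : ℝ) (u v : Lp ℝ 2 μ) : T.Q u (c • v) = c * T.Q u v := by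
  rw [T.symm, T.smul_left, T.symm v u]

lemma Q_zero_left (v : Lp ℝ 2 μ) : T.Q 0 v = 0 := by
  have := T.smul_left 0 0 v
  simpa using this

lemma Q_zero_right (v : Lp ℝ 2 μ) : T.Q v 0 = 0 := by
  rw [T.symm]; exact Q_zero_left T v

lemma Q_neg_left (u v : Lp ℝ 2 μ) : T.Q (-u) v = - T.Q u v := by
  have := T.smul_left (-1) u v
  simpa using this

lemma Q_sub_left (u v w : Lp ℝ 2 μ) : T.Q (u - v) w = T.Q u w - T.Q v w := by
  rw [sub_eq_add_neg, T.add_left, Q_neg_left, sub_eq_add_neg]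

lemma Q_sub_right (u v w : Lp ℝ 2 μ) : T.Q u (v - w) = T.Q u v - T.Q u w := by
  rw [T.symm, Q_sub_left, T.symm v u, T.symm w u]

lemma Q_cs (u v : Lp ℝ 2 μ) : |T.Q u v| ≤ Real.sqrt (T.Q u u) * Real.sqrt (T.Q v v) := by
  have key : (2 * T.Q u v) ^ 2 - 4 * T.Q v v * T.Q u u ≤ 0 := by
    have h' : ∀ t : ℝ, 0 ≤ T.Q v v * (t * t) + (2 * T.Q u v) * t + T.Q u u := by
      intro t
      have e : T.Q (u + t • v) (u + t • v)
          = T.Q v v * (t * t) + (2 * T.Q u v) * t + T.Q u u := by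
        simp only [T.add_left, Q_add_right T, T.smul_left, Q_smul_right T, T.symm v u]
        ring
      have := T.nonneg (u + t • v)
      linarith [e ▸ this]
    have := discrim_le_zero h'
    simpa [discrim] using this
  have h1 : (T.Q u v) ^ 2 ≤ T.Q u u * T.Q v v := by nlinarith
  calc |T.Q u v| = Real.sqrt ((T.Q u v) ^ 2) := (Real.sqrt_sq_eq_abs _).symm
    _ ≤ Real.sqrt (T.Q u u * T.Q v v) := Real.sqrt_le_sqrt h1
    _ = Real.sqrt (T.Q u u) * Real.sqrt (T.Q v v) := Real.sqrt_mul (T.nonneg u) _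


variable (G : ℝ → Lp ℝ 2 μ →L[ℝ] Lp ℝ 2 μ)

lemma res_mem (hG : T.IsResolvent G) {α : ℝ} (hα : 0 < α) (u : Lp ℝ 2 μ) :
    G α u ∈ T.dom := (hG α hα u).1

lemma res_eq (hG : T.IsResolvent G) {α : ℝ} (hα : 0 < α) (u : Lp ℝ 2 μ) {v : Lp ℝ 2 μ}
    (hv : v ∈ T.dom) : T.Q (G α u) v + α * ⟪G α u, v⟫ = ⟪u, v⟫ := (hG α hα u).2 v hv

lemma res_unique (hG : T.IsResolvent G) {α : ℝ} (hα : 0 < α) {u w : Lp ℝ 2 μ}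
    (hw : w ∈ T.dom) (h : ∀ v ∈ T.dom, T.Q w v + α * ⟪w, v⟫ = ⟪u, v⟫) :
    w = G α u := by
  have hd : w - G α u ∈ T.dom := T.dom.sub_mem hw (res_mem T G hG hα u)
  have h1 := h _ hd
  have h2 := res_eq T G hG hα u hd
  have h0 : T.Q (w - G α u) (w - G α u) + α * ⟪w - G α u, w - G α u⟫ = 0 := by
    rw [Q_sub_left, inner_sub_left]
    linarith
  have hQ := T.nonneg (w - G α u)
  have hip : (0:ℝ) ≤ ⟪w - G α u, w - G α u⟫ := real_inner_self_nonneg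
  have hz : (⟪w - G α u, w - G α u⟫ : ℝ) = 0 := by nlinarith
  exact sub_eq_zero.mp (inner_self_eq_zero.mp hz)

lemma res_symm (hG : T.IsResolvent G) {α : ℝ} (hα : 0 < α) (x y : Lp ℝ 2 μ) :
    ⟪G α x, y⟫ = ⟪x, G α y⟫ := by
  have h1 := res_eq T G hG hα x (res_mem T G hG hα y)
  have h2 := res_eq T G hG hα y (res_mem T G hG hα x)
  have hq : T.Q (G α x) (G α y) = T.Q (G α y) (G α x) := T.symm _ _
  have hi : (⟪G α x, G α y⟫ : ℝ) = ⟪G α y, G α x⟫ := real_inner_comm _ _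
  have hc : (⟪G α x, y⟫ : ℝ) = ⟪y, G α x⟫ := real_inner_comm _ _
  rw [hq, hi] at h1
  linarith

lemma res_pos (hG : T.IsResolvent G) {α : ℝ} (hα : 0 < α) (x : Lp ℝ 2 μ) :
    0 ≤ ⟪G α x, x⟫ := by
  have h := res_eq T G hG hα x (res_mem T G hG hα x)
  have hQ := T.nonneg (G α x)
  have hip : (0:ℝ) ≤ ⟪G α x, G α x⟫ := real_inner_self_nonneg
  have hc : (⟪G α x, x⟫ : ℝ) = ⟪x, G α x⟫ := real_inner_comm _ _
  nlinarith

lemma res_id (hG : T.IsResolvent G) {α β : ℝ} (hα : 0 < α) (hβ : 0 < β) (u : Lp ℝ 2 μ) :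
    G α u - G β u = (β - α) • G α (G β u) := by
  have key : G α u - G β u = G α ((β - α) • G β u) := by
    apply res_unique T G hG hα (T.dom.sub_mem (res_mem T G hG hα u) (res_mem T G hG hβ u))
    intro v hv
    have h1 := res_eq T G hG hα u hv
    have h2 := res_eq T G hG hβ u hv
    rw [Q_sub_left, inner_sub_left, real_inner_smul_left]
    nlinarith [h1, h2]
  rw [key, (G α).map_smul]


/-- `s α u = u - α G_α u`. -/
def sres (G : ℝ → Lp ℝ 2 μ →L[ℝ] Lp ℝ 2 μ) (α : ℝ) (u : Lp ℝ 2 μ) : Lp ℝ 2 μ :=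
  u - α • G α u

/-- approximation form `q_α(u) = α ⟨u - α G_α u, u⟩`. -/
def qres (G : ℝ → Lp ℝ 2 μ →L[ℝ] Lp ℝ 2 μ) (α : ℝ) (u : Lp ℝ 2 μ) : ℝ :=
  α * ⟪sres G α u, u⟫

lemma s_id (hG : T.IsResolvent G) {α β : ℝ} (hα : 0 < α) (hβ : 0 < β) (u : Lp ℝ 2 μ) :
    sres G α u = sres G β u + (β - α) • G α (sres G β u) := by
  have h := res_id T G hG hα hβ u
  have e1 : G α (sres G β u) = G α u - β • G α (G β u) := by
    simp [sres, map_sub, (G α).map_smul]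
  rw [e1, smul_sub, smul_comm (β - α) β]
  rw [← h]
  simp only [sres]
  module

lemma q_mono (hG : T.IsResolvent G) {α β : ℝ} (hα : 0 < α) (hαβ : α ≤ β) (u : Lp ℝ 2 μ) :
    qres G α u ≤ qres G β u := by
  have hβ : 0 < β := lt_of_lt_of_le hα hαβ
  have hs := s_id T G hG hα hβ u
  have e1 : (⟪sres G α u, u⟫ : ℝ)
      = ⟪sres G β u, u⟫ + (β - α) * ⟪sres G β u, G α u⟫ := by
    rw [hs, inner_add_left, real_inner_smul_left, res_symm T G hG hα]
  have e2 : (⟪sres G β u, sres G α u⟫ : ℝ)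
      = ⟪sres G β u, u⟫ - α * ⟪sres G β u, G α u⟫ := by
    simp only [sres, inner_sub_right, real_inner_smul_right]
  have e3 : (⟪sres G β u, sres G α u⟫ : ℝ)
      = ⟪sres G β u, sres G β u⟫ + (β - α) * ⟪G α (sres G β u), sres G β u⟫ := by
    nth_rewrite 1 [hs]
    rw [inner_add_right, real_inner_smul_right, real_inner_comm (sres G β u) ((G α) (sres G β u))]
  have h1 : (0:ℝ) ≤ ⟪sres G β u, sres G β u⟫ := real_inner_self_nonneg
  have h2 : (0:ℝ) ≤ ⟪G α (sres G β u), sres G β u⟫ := res_pos T G hG hα _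
  have key : qres G β u - qres G α u = (β - α) * ⟪sres G β u, sres G α u⟫ := by
    simp only [qres]
    rw [e1, e2]
    ring
  have hba : (0:ℝ) ≤ β - α := sub_nonneg.mpr hαβ
  nlinarith [key, e3, mul_nonneg hba h1, mul_nonneg (mul_nonneg hba hba) h2]

lemma q_eq (hG : T.IsResolvent G) {α : ℝ} (hα : 0 < α) (u : Lp ℝ 2 μ) :
    qres G α u = α * ⟪sres G α u, sres G α u⟫
      + T.Q (α • G α u) (α • G α u) := by
  have h := res_eq T G hG hα u (res_mem T G hG hα u)
  have e1 : (⟪sres G α u, G α u⟫ : ℝ) = T.Q (G α u) (G α u) := by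
    simp only [sres, inner_sub_left, real_inner_smul_left]
    have : (⟪u, G α u⟫:ℝ) = ⟪G α u, u⟫ := real_inner_comm _ _
    linarith [h, this.symm ▸ h]
  have e0 : (⟪sres G α u, u⟫:ℝ) = ⟪sres G α u, sres G α u⟫ + α * ⟪sres G α u, G α u⟫ := by
    have hd : u - sres G α u = α • G α u := by simp [sres]
    have h' : (⟪sres G α u, u - sres G α u⟫:ℝ) = α * ⟪sres G α u, G α u⟫ := by
      rw [hd, real_inner_smul_right]
    rw [inner_sub_right] at h'
    linarith
  have e2 : T.Q (α • G α u) (α • G α u) = α * (α * T.Q (G α u) (G α u)) := by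
    rw [T.smul_left, Q_smul_right]
  rw [qres, e0, e1, e2]
  ring

lemma q_nonneg (hG : T.IsResolvent G) {α : ℝ} (hα : 0 < α) (u : Lp ℝ 2 μ) :
    0 ≤ qres G α u := by
  have h := q_eq T G hG hα u
  have h1 : (0:ℝ) ≤ ⟪sres G α u, sres G α u⟫ := real_inner_self_nonneg
  have h2 := T.nonneg (α • G α u)
  nlinarith

lemma s_bound (hG : T.IsResolvent G) {α : ℝ} (hα : 0 < α) (u : Lp ℝ 2 μ) :
    α * ⟪sres G α u, sres G α u⟫ ≤ qres G α u := by
  have h := q_eq T G hG hα u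
  have h2 := T.nonneg (α • G α u)
  linarith

lemma v_bound (hG : T.IsResolvent G) {α : ℝ} (hα : 0 < α) (u : Lp ℝ 2 μ) :
    T.Q (α • G α u) (α • G α u) ≤ qres G α u := by
  have h := q_eq T G hG hα u
  have h1 : (0:ℝ) ≤ ⟪sres G α u, sres G α u⟫ := real_inner_self_nonneg
  nlinarith

lemma s_mem (hG : T.IsResolvent G) {α : ℝ} (hα : 0 < α) {u : Lp ℝ 2 μ} (hu : u ∈ T.dom) :
    sres G α u ∈ T.dom := T.dom.sub_mem hu (T.dom.smul_mem _ (res_mem T G hG hα u))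

lemma s_form (hG : T.IsResolvent G) {α : ℝ} (hα : 0 < α) {u : Lp ℝ 2 μ} (hu : u ∈ T.dom)
    {v : Lp ℝ 2 μ} (hv : v ∈ T.dom) :
    T.Q (sres G α u) v + α * ⟪sres G α u, v⟫ = T.Q u v := by
  have h := res_eq T G hG hα u hv
  simp only [sres, Q_sub_left, inner_sub_left, T.smul_left, real_inner_smul_left]
  nlinarith [h]

lemma q_le (hG : T.IsResolvent G) {α : ℝ} (hα : 0 < α) {u : Lp ℝ 2 μ} (hu : u ∈ T.dom) :
    qres G α u ≤ T.Q u u := by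
  have h1 := s_form T G hG hα hu hu
  have h2 := s_form T G hG hα hu (s_mem T G hG hα hu)
  have h3 := T.nonneg (sres G α u)
  have h4 : (0:ℝ) ≤ ⟪sres G α u, sres G α u⟫ := real_inner_self_nonneg
  have h5 : T.Q u (sres G α u) = T.Q (sres G α u) u := T.symm _ _
  simp only [qres]
  nlinarith


lemma q_diff (hG : T.IsResolvent G) {α β : ℝ} (hα : 0 < α) (hαβ : α ≤ β) (u : Lp ℝ 2 μ) :
    T.Q (α • G α u - β • G β u) (α • G α u - β • G β u) ≤ qres G β u - qres G α u := by
  have hβ : 0 < β := lt_of_lt_of_le hα hαβ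
  set sa := sres G α u with hsa
  set sb := sres G β u with hsb
  have eα : T.Q (α • G α u) (α • G α u) = qres G α u - α * ⟪sa, sa⟫ := by
    have := q_eq T G hG hα u; linarith
  have eβ : T.Q (β • G β u) (β • G β u) = qres G β u - β * ⟪sb, sb⟫ := by
    have := q_eq T G hG hβ u; linarith
  have hmem : β • G β u ∈ T.dom := T.dom.smul_mem _ (res_mem T G hG hβ u)
  have ecross : T.Q (α • G α u) (β • G β u) = qres G α u - α * ⟪sa, sb⟫ := by
    have hres := res_eq T G hG hα u hmem
    have h1 : (⟪sa, β • G β u⟫ : ℝ) = ⟪u, β • G β u⟫ - α * ⟪G α u, β • G β u⟫ := by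
      rw [hsa, sres, inner_sub_left, real_inner_smul_left]
    have h2 : (⟪sa, β • G β u⟫ : ℝ) = ⟪sa, u⟫ - ⟪sa, sb⟫ := by
      have : β • G β u = u - sb := by rw [hsb, sres]; abel
      rw [this, inner_sub_right]
    have h3 : T.Q (α • G α u) (β • G β u) = α * T.Q (G α u) (β • G β u) := T.smul_left _ _ _
    rw [h3, qres]
    nlinarith [hres, h1, h2]
  have expand : T.Q (α • G α u - β • G β u) (α • G α u - β • G β u)
      = T.Q (α • G α u) (α • G α u) - 2 * T.Q (α • G α u) (β • G β u)
        + T.Q (β • G β u) (β • G β u) := by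
    rw [Q_sub_left, Q_sub_right, Q_sub_right, T.symm (β • G β u) (α • G α u)]
    ring
  have amgm : 2 * ⟪sa, sb⟫ ≤ ⟪sa, sa⟫ + ⟪sb, sb⟫ := by
    have h0 : (0:ℝ) ≤ ⟪sa - sb, sa - sb⟫ := real_inner_self_nonneg
    have he : (⟪sa - sb, sa - sb⟫:ℝ) = ⟪sa, sa⟫ - 2 * ⟪sa, sb⟫ + ⟪sb, sb⟫ := by
      rw [inner_sub_left, inner_sub_right, inner_sub_right, real_inner_comm sb sa]
      ring
    linarith
  have hB : (0:ℝ) ≤ ⟪sb, sb⟫ := real_inner_self_nonneg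
  rw [expand, eα, eβ, ecross]
  nlinarith [mul_nonneg hα.le (by linarith : (0:ℝ) ≤ ⟪sa, sa⟫ + ⟪sb, sb⟫ - 2 * ⟪sa, sb⟫),
    mul_nonneg (by linarith : (0:ℝ) ≤ β - α) hB]


/-- The sequence `v_n = (n+1) G_{n+1} u`. -/
def vseq (G : ℝ → Lp ℝ 2 μ →L[ℝ] Lp ℝ 2 μ) (u : Lp ℝ 2 μ) (n : ℕ) : Lp ℝ 2 μ :=
  ((n:ℝ)+1) • G ((n:ℝ)+1) u

lemma key (hG : T.IsResolvent G) (u : Lp ℝ 2 μ) (M : ℝ)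
    (hM : ∀ n : ℕ, qres G ((n:ℝ)+1) u ≤ M) :
    u ∈ T.dom ∧
      Tendsto (fun n : ℕ => T.Q (vseq G u n) (vseq G u n)) atTop (nhds (T.Q u u)) := by
  have hpos : ∀ n : ℕ, (0:ℝ) < (n:ℝ)+1 := fun n => by positivity
  set q : ℕ → ℝ := fun n => qres G ((n:ℝ)+1) u with hq
  have hmono : Monotone q := by
    intro m n hmn
    have hc : (m:ℝ) ≤ n := by exact_mod_cast hmn
    exact q_mono T G hG (hpos m) (by linarith) u
  have hbdd : BddAbove (Set.range q) := ⟨M, by rintro x ⟨n, rfl⟩; exact hM n⟩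
  have hqtend : Tendsto q atTop (nhds (⨆ n, q n)) := tendsto_atTop_ciSup hmono hbdd
  have hqcauchy : CauchySeq q := hqtend.cauchySeq
  -- norm bound : ‖vseq n - u‖² = ⟪s,s⟫ ≤ M / (n+1)
  have hsv : ∀ n : ℕ, vseq G u n - u = -(sres G ((n:ℝ)+1) u) := by
    intro n; simp [vseq, sres]
  have hnorm : ∀ n : ℕ, ‖vseq G u n - u‖ ^ 2 ≤ M / ((n:ℝ)+1) := by
    intro n
    have h1 := s_bound T G hG (hpos n) u
    have h2 : (⟪sres G ((n:ℝ)+1) u, sres G ((n:ℝ)+1) u⟫:ℝ)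
        = ‖sres G ((n:ℝ)+1) u‖^2 := real_inner_self_eq_norm_sq _
    have h3 : ‖vseq G u n - u‖ = ‖sres G ((n:ℝ)+1) u‖ := by rw [hsv n, norm_neg]
    rw [h3, ← h2]
    rw [div_eq_inv_mul, le_inv_mul_iff₀ (hpos n)]
    calc ((n:ℝ)+1) * ⟪sres G ((n:ℝ)+1) u, sres G ((n:ℝ)+1) u⟫ ≤ q n := h1
      _ ≤ M := hM n
  have hM0 : 0 ≤ M := le_trans (q_nonneg T G hG (hpos 0) u) (hM 0)
  have hnormtend : Tendsto (fun n : ℕ => ‖vseq G u n - u‖ ^ 2) atTop (nhds 0) := by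
    apply squeeze_zero (fun n => by positivity) hnorm
    have hat : Tendsto (fun n : ℕ => (n:ℝ) + 1) atTop atTop :=
      tendsto_atTop_add_const_right atTop 1
        (tendsto_natCast_atTop_atTop : Tendsto (fun n : ℕ => (n:ℝ)) atTop atTop)
    exact hat.const_div_atTop M
  -- Cauchy condition for closedness
  have hcond : ∀ ε > 0, ∃ N, ∀ m ≥ N, ∀ n ≥ N,
      T.Q (vseq G u m - vseq G u n) (vseq G u m - vseq G u n)
        + ‖vseq G u m - vseq G u n‖ ^ 2 < ε := by
    intro ε hε
    rw [Metric.cauchySeq_iff] at hqcauchy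
    obtain ⟨N1, hN1⟩ := hqcauchy (ε/2) (by linarith)
    obtain ⟨N2, hN2⟩ := Metric.tendsto_atTop.mp hnormtend (ε/8) (by linarith)
    refine ⟨max N1 N2, fun m hm n hn => ?_⟩
    have hQ : T.Q (vseq G u m - vseq G u n) (vseq G u m - vseq G u n) < ε/2 := by
      rcases le_total m n with h | h
      · have hc : (m:ℝ) ≤ n := by exact_mod_cast h
        have := q_diff T G hG (hpos m) (by linarith : ((m:ℝ)+1) ≤ (n:ℝ)+1) u
        have hd := hN1 n (le_trans (le_max_left _ _) hn) m (le_trans (le_max_left _ _) hm)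
        rw [Real.dist_eq] at hd
        calc T.Q (vseq G u m - vseq G u n) (vseq G u m - vseq G u n) ≤ q n - q m := this
          _ ≤ |q n - q m| := le_abs_self _
          _ < ε/2 := by simpa [hq] using hd
      · have hc : (n:ℝ) ≤ m := by exact_mod_cast h
        have := q_diff T G hG (hpos n) (by linarith : ((n:ℝ)+1) ≤ (m:ℝ)+1) u
        have heq : vseq G u m - vseq G u n = -(vseq G u n - vseq G u m) := by abel
        have hd := hN1 m (le_trans (le_max_left _ _) hm) n (le_trans (le_max_left _ _) hn)
        rw [Real.dist_eq] at hd
        have hneg : T.Q (vseq G u m - vseq G u n) (vseq G u m - vseq G u n)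
            = T.Q (vseq G u n - vseq G u m) (vseq G u n - vseq G u m) := by
          rw [heq, Q_neg_left, T.symm, Q_neg_left, T.symm]; ring
        rw [hneg]
        calc T.Q (vseq G u n - vseq G u m) (vseq G u n - vseq G u m) ≤ q m - q n := this
          _ ≤ |q m - q n| := le_abs_self _
          _ < ε/2 := by simpa [hq] using hd
    have hN : T.Q (vseq G u m - vseq G u n) (vseq G u m - vseq G u n)
        + ‖vseq G u m - vseq G u n‖ ^ 2 < ε/2 + ε/2 := by
      have h1 : ‖vseq G u m - vseq G u n‖ ≤ ‖vseq G u m - u‖ + ‖vseq G u n - u‖ := by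
        have : vseq G u m - vseq G u n = (vseq G u m - u) - (vseq G u n - u) := by abel
        rw [this]; exact norm_sub_le _ _
      have h2 := hN2 m (le_trans (le_max_right _ _) hm)
      have h3 := hN2 n (le_trans (le_max_right _ _) hn)
      rw [Real.dist_eq] at h2 h3
      have h2' : ‖vseq G u m - u‖ ^ 2 < ε/8 := by
        have := abs_sub_abs_le_abs_sub (‖vseq G u m - u‖ ^ 2) 0
        calc ‖vseq G u m - u‖ ^ 2 ≤ |‖vseq G u m - u‖ ^ 2 - 0| := by
              rw [sub_zero]; exact le_abs_self _
          _ < ε/8 := h2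
      have h3' : ‖vseq G u n - u‖ ^ 2 < ε/8 := by
        calc ‖vseq G u n - u‖ ^ 2 ≤ |‖vseq G u n - u‖ ^ 2 - 0| := by
              rw [sub_zero]; exact le_abs_self _
          _ < ε/8 := h3
      have h4 : ‖vseq G u m - vseq G u n‖ ^ 2
          ≤ 2 * ‖vseq G u m - u‖ ^ 2 + 2 * ‖vseq G u n - u‖ ^ 2 := by
        have hp := pow_le_pow_left₀ (norm_nonneg (vseq G u m - vseq G u n)) h1 2
        nlinarith [hp, sq_nonneg (‖vseq G u m - u‖ - ‖vseq G u n - u‖)]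
      linarith
    linarith
  obtain ⟨g, hg, hgtend⟩ := T.closed (vseq G u)
    (fun n => T.dom.smul_mem _ (res_mem T G hG (hpos n) u)) hcond
  -- identify g = u
  have hEQ : ∀ n, 0 ≤ T.Q (vseq G u n - g) (vseq G u n - g) := fun n => T.nonneg _
  have hgnorm : Tendsto (fun n : ℕ => ‖vseq G u n - g‖ ^ 2) atTop (nhds 0) := by
    apply squeeze_zero (fun n => by positivity) (fun n => ?_) hgtend
    linarith [hEQ n]
  have hgnorm' : Tendsto (fun n : ℕ => ‖vseq G u n - g‖) atTop (nhds 0) := by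
    have := hgnorm.sqrt
    simpa [Real.sqrt_sq (norm_nonneg _)] using this
  have hunorm' : Tendsto (fun n : ℕ => ‖vseq G u n - u‖) atTop (nhds 0) := by
    have := hnormtend.sqrt
    simpa [Real.sqrt_sq (norm_nonneg _)] using this
  have hgu : g = u := by
    have hle : ∀ n : ℕ, ‖g - u‖ ≤ ‖vseq G u n - g‖ + ‖vseq G u n - u‖ := by
      intro n
      have : g - u = (vseq G u n - u) - (vseq G u n - g) := by abel
      rw [this]
      calc ‖(vseq G u n - u) - (vseq G u n - g)‖
          ≤ ‖vseq G u n - u‖ + ‖vseq G u n - g‖ := norm_sub_le _ _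
        _ = ‖vseq G u n - g‖ + ‖vseq G u n - u‖ := by ring
    have hsum : Tendsto (fun n : ℕ => ‖vseq G u n - g‖ + ‖vseq G u n - u‖) atTop (nhds 0) := by
      simpa using hgnorm'.add hunorm'
    have hge := ge_of_tendsto hsum (Filter.Eventually.of_forall fun n => hle n)
    have hz : ‖g - u‖ = 0 := le_antisymm hge (norm_nonneg _)
    exact sub_eq_zero.mp (norm_eq_zero.mp hz)
  rw [hgu] at hgtend hg
  refine ⟨hg, ?_⟩
  have hdQ : Tendsto (fun n : ℕ => T.Q (vseq G u n - u) (vseq G u n - u)) atTop (nhds 0) := by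
    apply squeeze_zero (fun n => T.nonneg _) (fun n => ?_) hgtend
    have h0 : (0:ℝ) ≤ ‖vseq G u n - u‖ ^ 2 := by positivity
    linarith
  have hsqrt : Tendsto (fun n : ℕ => Real.sqrt (T.Q (vseq G u n - u) (vseq G u n - u)))
      atTop (nhds 0) := by
    have := hdQ.sqrt
    simpa using this
  have hcross : Tendsto (fun n : ℕ => T.Q u (vseq G u n - u)) atTop (nhds 0) := by
    refine squeeze_zero_norm (fun n => Q_cs T u (vseq G u n - u)) ?_
    simpa using hsqrt.const_mul (Real.sqrt (T.Q u u))
  have he : ∀ n : ℕ, T.Q (vseq G u n) (vseq G u n)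
      = T.Q u u + (2 * T.Q u (vseq G u n - u)
        + T.Q (vseq G u n - u) (vseq G u n - u)) := by
    intro n
    conv_lhs => rw [show vseq G u n = u + (vseq G u n - u) by abel]
    rw [T.add_left, Q_add_right, Q_add_right, T.symm (vseq G u n - u) u]
    ring
  have final : Tendsto (fun n : ℕ => T.Q u u + (2 * T.Q u (vseq G u n - u)
      + T.Q (vseq G u n - u) (vseq G u n - u))) atTop (nhds (T.Q u u + (2 * 0 + 0))) :=
    tendsto_const_nhds.add ((hcross.const_mul 2).add hdQ)
  have hfin : Tendsto (fun n : ℕ => T.Q (vseq G u n) (vseq G u n))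
      atTop (nhds (T.Q u u + (2*0+0))) := by
    rw [funext he]
    exact final
  simpa using hfin


section IndMul

variable {A : Set X}

lemma indMul_coe (hA : MeasurableSet A) (f : Lp ℝ 2 μ) :
    (indMul A f : X → ℝ) =ᵐ[μ] A.indicator f := by
  simp only [indMul, dif_pos hA]
  exact MemLp.coeFn_toLp _

lemma indMul_add (hA : MeasurableSet A) (f g : Lp ℝ 2 μ) :
    indMul A (f + g) = indMul A f + indMul A g := by
  apply Lp.ext
  filter_upwards [indMul_coe hA (f + g), indMul_coe hA f, indMul_coe hA g,
    Lp.coeFn_add (indMul A f) (indMul A g), (Lp.coeFn_add f g).indicator (s := A)]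
    with x h1 h2 h3 h4 h5
  rw [h1, h4, h5, Pi.add_apply, h2, h3]
  by_cases hx : x ∈ A <;>
    simp [Set.indicator_of_mem, Set.indicator_of_notMem, hx]

lemma indMul_smul (hA : MeasurableSet A) (c : ℝ) (f : Lp ℝ 2 μ) :
    indMul A (c • f) = c • indMul A f := by
  apply Lp.ext
  filter_upwards [indMul_coe hA (c • f), indMul_coe hA f,
    Lp.coeFn_smul c (indMul A f), (Lp.coeFn_smul c f).indicator (s := A)]
    with x h1 h2 h3 h4
  rw [h1, h3, h4, Pi.smul_apply, h2]
  by_cases hx : x ∈ A <;>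
    simp [Set.indicator_of_mem, Set.indicator_of_notMem, hx]

lemma indMul_sub (hA : MeasurableSet A) (f g : Lp ℝ 2 μ) :
    indMul A (f - g) = indMul A f - indMul A g := by
  have h := indMul_add hA (f - g) g
  rw [sub_add_cancel] at h
  rw [h]; abel

lemma indMul_add_compl (hA : MeasurableSet A) (f : Lp ℝ 2 μ) :
    indMul A f + indMul Aᶜ f = f := by
  apply Lp.ext
  filter_upwards [indMul_coe hA f, indMul_coe hA.compl f,
    Lp.coeFn_add (indMul A f) (indMul Aᶜ f)] with x h1 h2 h3
  rw [h3, Pi.add_apply, h1, h2]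
  exact congrFun (Set.indicator_self_add_compl A (f : X → ℝ)) x

lemma indMul_compl_eq (hA : MeasurableSet A) (f : Lp ℝ 2 μ) :
    indMul Aᶜ f = f - indMul A f := by
  rw [eq_sub_iff_add_eq, add_comm]
  exact indMul_add_compl hA f

lemma indMul_inner (hA : MeasurableSet A) (f g : Lp ℝ 2 μ) :
    (⟪indMul A f, g⟫ : ℝ) = ⟪f, indMul A g⟫ := by
  rw [L2.inner_def, L2.inner_def]
  apply integral_congr_ae
  filter_upwards [indMul_coe hA f, indMul_coe hA g] with x h1 h2
  rw [h1, h2]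
  by_cases hx : x ∈ A <;>
    simp [Set.indicator_of_mem, Set.indicator_of_notMem, hx, RCLike.inner_apply,
      mul_comm]

lemma indMul_indMul (hA : MeasurableSet A) (f : Lp ℝ 2 μ) :
    indMul A (indMul A f) = indMul A f := by
  apply Lp.ext
  filter_upwards [indMul_coe hA (indMul A f), indMul_coe hA f,
    (indMul_coe hA f).indicator (s := A)] with x h1 h2 h3
  rw [h1, h3, Set.indicator_indicator, Set.inter_self, h2]

lemma indMul_compl_indMul (hA : MeasurableSet A) (f : Lp ℝ 2 μ) :
    indMul Aᶜ (indMul A f) = 0 := by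
  apply Lp.ext
  filter_upwards [indMul_coe hA.compl (indMul A f),
    (indMul_coe hA f).indicator (s := Aᶜ), Lp.coeFn_zero (E := ℝ) (p := 2) (μ := μ)]
    with x h1 h2 h3
  rw [h1, h2, Set.indicator_indicator, Set.compl_inter_self, h3]
  simp

lemma indMul_orth (hA : MeasurableSet A) (f g : Lp ℝ 2 μ) :
    (⟪indMul A f, indMul Aᶜ g⟫ : ℝ) = 0 := by
  rw [indMul_inner hA]
  have h : indMul A (indMul Aᶜ g) = 0 := by
    have := indMul_compl_indMul hA.compl g
    rwa [compl_compl] at this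
  rw [h, inner_zero_right]

end IndMul

end InvAux

open InvAux
/-- characterization of invariance via the form: `A` is `Q`-invariant iff
`1_A f ∈ D(Q)` and `Q(f) = Q(1_A f) + Q(1_{X∖A} f)` for all `f ∈ D(Q)`. -/
theorem invariant_iff_form_decomposes {μ : Measure X} (T : WideForm μ) (hpp : T.PosPres)
    (G : ℝ → Lp ℝ 2 μ →L[ℝ] Lp ℝ 2 μ) (hG : T.IsResolvent G)
    (A : Set X) (hA : MeasurableSet A) :
    ResInvariant G A ↔
      ∀ f ∈ T.dom, indMul A f ∈ T.dom ∧
        T.Q f f = T.Q (indMul A f) (indMul A f) + T.Q (indMul Aᶜ f) (indMul Aᶜ f) := by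
  constructor
  · rintro ⟨-, hI⟩ f hf
    have hpos : ∀ n : ℕ, (0:ℝ) < (n:ℝ)+1 := fun n => by positivity
    have hIc : ∀ α : ℝ, 0 < α → ∀ g : Lp ℝ 2 μ,
        G α (indMul Aᶜ g) = indMul Aᶜ (G α g) := by
      intro α hα g
      rw [indMul_compl_eq hA, indMul_compl_eq hA, map_sub, hI α hα g]
    -- the approximation forms decompose
    have hqdec : ∀ α : ℝ, 0 < α →
        qres G α (indMul A f) + qres G α (indMul Aᶜ f) = qres G α f := by
      intro α hα
      have hsA : sres G α (indMul A f) = indMul A (sres G α f) := by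
        rw [sres, sres, hI α hα f, ← indMul_smul hA, ← indMul_sub hA]
      have hsC : sres G α (indMul Aᶜ f) = indMul Aᶜ (sres G α f) := by
        rw [sres, sres, hIc α hα f, ← indMul_smul hA.compl, ← indMul_sub hA.compl]
      have e1 : (⟪sres G α (indMul A f), indMul A f⟫:ℝ) = ⟪sres G α f, indMul A f⟫ := by
        rw [hsA, indMul_inner hA, indMul_indMul hA]
      have e2 : (⟪sres G α (indMul Aᶜ f), indMul Aᶜ f⟫:ℝ)
          = ⟪sres G α f, indMul Aᶜ f⟫ := by
        rw [hsC, indMul_inner hA.compl, indMul_indMul hA.compl]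
      have e3 : (⟪sres G α f, indMul A f⟫:ℝ) + ⟪sres G α f, indMul Aᶜ f⟫
          = ⟪sres G α f, f⟫ := by
        rw [← inner_add_right, indMul_add_compl hA]
      simp only [qres, e1, e2]
      ring_nf
      nlinarith [e3]
    have hboundA : ∀ n : ℕ, qres G ((n:ℝ)+1) (indMul A f) ≤ T.Q f f := by
      intro n
      have h1 := hqdec _ (hpos n)
      have h2 := q_nonneg T G hG (hpos n) (indMul Aᶜ f)
      have h3 := q_le T G hG (hpos n) hf
      linarith
    have hboundC : ∀ n : ℕ, qres G ((n:ℝ)+1) (indMul Aᶜ f) ≤ T.Q f f := by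
      intro n
      have h1 := hqdec _ (hpos n)
      have h2 := q_nonneg T G hG (hpos n) (indMul A f)
      have h3 := q_le T G hG (hpos n) hf
      linarith
    obtain ⟨hmemA, htA⟩ := key T G hG (indMul A f) (T.Q f f) hboundA
    obtain ⟨hmemC, htC⟩ := key T G hG (indMul Aᶜ f) (T.Q f f) hboundC
    obtain ⟨-, htf⟩ := key T G hG f (T.Q f f) (fun n => q_le T G hG (hpos n) hf)
    refine ⟨hmemA, ?_⟩
    have hv : ∀ n : ℕ, vseq G f n = vseq G (indMul A f) n + vseq G (indMul Aᶜ f) n := by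
      intro n
      rw [vseq, vseq, vseq, hI _ (hpos n), hIc _ (hpos n), ← smul_add,
        indMul_add_compl hA]
    have hcross : ∀ n : ℕ,
        T.Q (vseq G (indMul A f) n) (vseq G (indMul Aᶜ f) n) = 0 := by
      intro n
      set α : ℝ := (n:ℝ)+1 with hα
      have hres := res_eq T G hG (hpos n) (indMul A f)
        (res_mem T G hG (hpos n) (indMul Aᶜ f))
      have e1 : (⟪indMul A f, G α (indMul Aᶜ f)⟫:ℝ) = 0 := by
        rw [hIc α (hpos n) f]
        exact indMul_orth hA f (G α f)
      have e2 : (⟪G α (indMul A f), G α (indMul Aᶜ f)⟫:ℝ) = 0 := by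
        rw [hI α (hpos n) f, hIc α (hpos n) f]
        exact indMul_orth hA (G α f) (G α f)
      have e0 : T.Q (G α (indMul A f)) (G α (indMul Aᶜ f)) = 0 := by
        rw [e2] at hres
        rw [e1] at hres
        linarith
      rw [vseq, vseq, T.smul_left, Q_smul_right, ← hα, e0]
      ring
    have hQsum : (fun n : ℕ => T.Q (vseq G f n) (vseq G f n))
        = fun n : ℕ => T.Q (vseq G (indMul A f) n) (vseq G (indMul A f) n)
          + T.Q (vseq G (indMul Aᶜ f) n) (vseq G (indMul Aᶜ f) n) := by
      funext n
      rw [hv n, T.add_left, Q_add_right, Q_add_right,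
        T.symm (vseq G (indMul Aᶜ f) n) (vseq G (indMul A f) n), hcross n]
      ring
    have hsum := htA.add htC
    rw [← hQsum] at hsum
    exact tendsto_nhds_unique htf hsum
  · intro hdec
    refine ⟨hA, ?_⟩
    intro α hα f
    -- diagonal cross terms vanish
    have cross0 : ∀ u, u ∈ T.dom → T.Q (indMul A u) (indMul Aᶜ u) = 0 := by
      intro u hu
      obtain ⟨hmem, heq⟩ := hdec u hu
      have hexp : T.Q u u = T.Q (indMul A u) (indMul A u)
          + 2 * T.Q (indMul A u) (indMul Aᶜ u)
          + T.Q (indMul Aᶜ u) (indMul Aᶜ u) := by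
        conv_lhs => rw [(indMul_add_compl hA u).symm]
        rw [T.add_left, Q_add_right, Q_add_right,
          T.symm (indMul Aᶜ u) (indMul A u)]
        ring
      linarith
    -- polarized cross terms
    have pair : ∀ u, u ∈ T.dom → ∀ v, v ∈ T.dom →
        T.Q (indMul A u) (indMul Aᶜ v) + T.Q (indMul A v) (indMul Aᶜ u) = 0 := by
      intro u hu v hv
      have h1 := cross0 (u+v) (T.dom.add_mem hu hv)
      rw [indMul_add hA, indMul_add hA.compl] at h1
      rw [T.add_left, Q_add_right, Q_add_right] at h1
      have h2 := cross0 u hu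
      have h3 := cross0 v hv
      linarith
    have cross : ∀ u, u ∈ T.dom → ∀ v, v ∈ T.dom → T.Q (indMul A v) (indMul Aᶜ u) = 0 := by
      intro u hu v hv
      have hPv : indMul A v ∈ T.dom := (hdec v hv).1
      have := pair u hu (indMul A v) hPv
      rw [indMul_compl_indMul hA v, indMul_indMul hA v, Q_zero_right] at this
      linarith
    -- Q-selfadjointness of the multiplication operator
    have selfadj : ∀ g, g ∈ T.dom → ∀ v, v ∈ T.dom →
        T.Q (indMul A g) v = T.Q g (indMul A v) := by
      intro g hg v hv
      have hPv : indMul A v ∈ T.dom := (hdec v hv).1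
      have e1 : T.Q (indMul A g) v
          = T.Q (indMul A g) (indMul A v) + T.Q (indMul A g) (indMul Aᶜ v) := by
        conv_lhs => rw [(indMul_add_compl hA v).symm]
        rw [Q_add_right]
      have e2 : T.Q g (indMul A v)
          = T.Q (indMul A g) (indMul A v) + T.Q (indMul Aᶜ g) (indMul A v) := by
        conv_lhs => rw [(indMul_add_compl hA g).symm]
        rw [T.add_left]
      have e3 := cross v hv g hg
      have e4 : T.Q (indMul Aᶜ g) (indMul A v) = 0 := by
        rw [T.symm]; exact cross g hg v hv
      rw [e1, e2, e3, e4]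
    -- uniqueness of the resolvent
    have hGf := res_mem T G hG hα f
    have hw : indMul A (G α f) ∈ T.dom := (hdec _ hGf).1
    refine (res_unique T G hG hα hw ?_).symm
    intro v hv
    have hPv : indMul A v ∈ T.dom := (hdec v hv).1
    have h1 : T.Q (indMul A (G α f)) v = T.Q (G α f) (indMul A v) := selfadj _ hGf v hv
    have h2 : (⟪indMul A (G α f), v⟫:ℝ) = ⟪G α f, indMul A v⟫ := indMul_inner hA _ _
    have h3 := res_eq T G hG hα f hPv
    have h4 : (⟪f, indMul A v⟫:ℝ) = ⟪indMul A f, v⟫ := (indMul_inner hA f v).symm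
    rw [h1, h2]
    rw [h4] at h3
    exact h3
end
end

section
/- Let Q be a closed form in the wide sense. (a) If A ⊆ X is Q-invariant and B ⊆ A is Q_A-invariant, then B is Q-invariant. (b) If B ⊆ X is Q-invariant and A ⊆ X is any measurable set, then B ∩ A is Q_A-invariant, in the sense that for every g ∈ D(Q_A) we have g·1_{A∩B} ∈ D(Q_A), g·1_{A∖B} ∈ D(Q_A), and Q_A(g·1_{A∩B}, g·1_{A∖B}) = 0. -/
open MeasureTheory Filter Topology RealInnerProductSpace

noncomputable section

variable {X : Type*} [MeasurableSpace X]

set_option maxHeartbeats 1000000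

open scoped Classical

section Aux

variable {μ : Measure X}

lemma indMul_coeFn {A : Set X} (hA : MeasurableSet A) (f : Lp ℝ 2 μ) :
    (indMul A f : X → ℝ) =ᵐ[μ] A.indicator f := by
  rw [indMul, dif_pos hA]; exact MemLp.coeFn_toLp _

lemma indMul_indMul {A B : Set X} (hA : MeasurableSet A) (hB : MeasurableSet B)
    (f : Lp ℝ 2 μ) : indMul A (indMul B f) = indMul (A ∩ B) f := by
  apply Lp.ext
  filter_upwards [indMul_coeFn hA (indMul B f), indMul_coeFn (hA.inter hB) f,
    indMul_coeFn hB f] with x h1 h2 h3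
  rw [h1, h2, Set.indicator_apply, Set.indicator_apply]
  by_cases hx : x ∈ A
  · simp only [hx, if_true, h3, Set.indicator_apply, Set.mem_inter_iff, hx, true_and]
  · simp [hx]

lemma indMul_empty (f : Lp ℝ 2 μ) : indMul (∅ : Set X) f = 0 := by
  apply Lp.ext
  filter_upwards [indMul_coeFn MeasurableSet.empty f, Lp.coeFn_zero ℝ 2 μ] with x h1 h2
  rw [h1, h2]; simp

lemma indMul_idem {A : Set X} (hA : MeasurableSet A) (f : Lp ℝ 2 μ) :
    indMul A (indMul A f) = indMul A f := by
  rw [indMul_indMul hA hA, Set.inter_self]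

lemma indMul_add_compl {A : Set X} (hA : MeasurableSet A) (f : Lp ℝ 2 μ) :
    indMul A f + indMul Aᶜ f = f := by
  apply Lp.ext
  filter_upwards [Lp.coeFn_add (indMul A f) (indMul Aᶜ f), indMul_coeFn hA f,
    indMul_coeFn hA.compl f] with x h1 h2 h3
  rw [h1, Pi.add_apply, h2, h3]
  by_cases hx : x ∈ A <;> simp [Set.indicator_apply, hx]

lemma indMul_smul {A : Set X} (hA : MeasurableSet A) (c : ℝ) (f : Lp ℝ 2 μ) :
    indMul A (c • f) = c • indMul A f := by
  apply Lp.ext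
  filter_upwards [indMul_coeFn hA (c • f), Lp.coeFn_smul c (indMul A f),
    Lp.coeFn_smul c f, indMul_coeFn hA f] with x h1 h2 h3 h4
  rw [h1, h2, Pi.smul_apply, h4, Set.indicator_apply, Set.indicator_apply]
  by_cases hx : x ∈ A
  · simp only [hx, if_true]; rw [h3]; simp
  · simp [hx]

lemma indMul_sub {A : Set X} (hA : MeasurableSet A) (f g : Lp ℝ 2 μ) :
    indMul A (f - g) = indMul A f - indMul A g := by
  apply Lp.ext
  filter_upwards [indMul_coeFn hA (f - g), Lp.coeFn_sub (indMul A f) (indMul A g),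
    indMul_coeFn hA f, indMul_coeFn hA g, Lp.coeFn_sub f g] with x h1 h2 h3 h4 h5
  rw [h1, h2, Pi.sub_apply, h3, h4, Set.indicator_apply, Set.indicator_apply,
    Set.indicator_apply]
  by_cases hx : x ∈ A
  · simp only [hx, if_true]; rw [h5]; simp
  · simp [hx]

lemma indMul_zero (A : Set X) : indMul A (0 : Lp ℝ 2 μ) = 0 := by
  by_cases hA : MeasurableSet A
  · apply Lp.ext
    filter_upwards [indMul_coeFn hA (0 : Lp ℝ 2 μ), Lp.coeFn_zero ℝ 2 μ] with x h1 h2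
    rw [h1, h2, Set.indicator_apply]
    split_ifs
    · exact h2
    · rfl
  · rw [indMul, dif_neg hA]

lemma inner_indMul {A : Set X} (hA : MeasurableSet A) (f g : Lp ℝ 2 μ) :
    ⟪indMul A f, g⟫ = ⟪f, indMul A g⟫ := by
  rw [L2.inner_def, L2.inner_def]
  apply integral_congr_ae
  filter_upwards [indMul_coeFn hA f, indMul_coeFn hA g] with x h1 h2
  rw [h1, h2]
  simp only [RCLike.inner_apply, conj_trivial]
  by_cases hx : x ∈ A <;> simp [Set.indicator, hx]

lemma norm_indMul_le {A : Set X} (hA : MeasurableSet A) (f : Lp ℝ 2 μ) :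
    ‖indMul A f‖ ≤ ‖f‖ := by
  have h1 : ‖indMul A f‖ ^ 2 = ⟪indMul A f, indMul A f⟫ :=
    (real_inner_self_eq_norm_sq _).symm
  have h2 : ⟪indMul A f, indMul A f⟫ = ⟪f, indMul A f⟫ := by
    rw [inner_indMul hA, indMul_idem hA]
  have h3 : ⟪f, indMul A f⟫ ≤ ‖f‖ * ‖indMul A f‖ := real_inner_le_norm _ _
  nlinarith [norm_nonneg (indMul A f), norm_nonneg f]

namespace WideForm

variable {T : WideForm μ}

lemma add_right (T : WideForm μ) (u v w : Lp ℝ 2 μ) : T.Q u (v + w) = T.Q u v + T.Q u w := by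
  rw [T.symm, T.add_left, T.symm v u, T.symm w u]

lemma smul_right (T : WideForm μ) (c : ℝ) (u v : Lp ℝ 2 μ) : T.Q u (c • v) = c * T.Q u v := by
  rw [T.symm, T.smul_left, T.symm]

lemma sub_left (T : WideForm μ) (u v w : Lp ℝ 2 μ) : T.Q (u - v) w = T.Q u w - T.Q v w := by
  rw [sub_eq_add_neg, ← neg_one_smul ℝ v, T.add_left, T.smul_left]; ring

lemma sub_right (T : WideForm μ) (u v w : Lp ℝ 2 μ) : T.Q u (v - w) = T.Q u v - T.Q u w := by
  rw [T.symm, T.sub_left, T.symm v u, T.symm w u]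

lemma cs (T : WideForm μ) (x y : Lp ℝ 2 μ) : (T.Q x y) ^ 2 ≤ T.Q x x * T.Q y y := by
  have h : ∀ t : ℝ, 0 ≤ T.Q y y * (t * t) + (2 * T.Q x y) * t + T.Q x x := by
    intro t
    have h0 := T.nonneg (x + t • y)
    rw [T.add_left, T.add_right, T.add_right, T.smul_left, T.smul_right, T.smul_right,
      T.smul_left, T.symm y x] at h0
    nlinarith [h0]
  have hd := discrim_le_zero h
  rw [discrim] at hd
  nlinarith [hd]

lemma abs_le (T : WideForm μ) (x y : Lp ℝ 2 μ) :
    |T.Q x y| ≤ Real.sqrt (T.Q x x) * Real.sqrt (T.Q y y) := by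
  have h1 : |T.Q x y| = Real.sqrt ((T.Q x y) ^ 2) := (Real.sqrt_sq_eq_abs _).symm
  rw [h1, ← Real.sqrt_mul (T.nonneg x)]
  exact Real.sqrt_le_sqrt (T.cs x y)

/-- Q-Cauchy–Schwarz division trick. -/
lemma le_of_eq_pair (T : WideForm μ) {h z : Lp ℝ 2 μ} (he : T.Q h h = T.Q z h) :
    T.Q h h ≤ T.Q z z := by
  have hcs := T.cs z h
  rcases eq_or_lt_of_le (T.nonneg h) with h0 | h0
  · rw [← h0]; exact T.nonneg z
  · nlinarith [hcs, he, h0]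

end WideForm

section Res

variable {T : WideForm μ} {G : ℝ → Lp ℝ 2 μ →L[ℝ] Lp ℝ 2 μ}

lemma res_unique (T : WideForm μ) {α : ℝ} (hα : 0 < α) {w₁ w₂ : Lp ℝ 2 μ}
    (h₁ : w₁ ∈ T.dom) (h₂ : w₂ ∈ T.dom)
    (h : ∀ v ∈ T.dom, T.Q w₁ v + α * ⟪w₁, v⟫ = T.Q w₂ v + α * ⟪w₂, v⟫) : w₁ = w₂ := by
  have hd : w₁ - w₂ ∈ T.dom := T.dom.sub_mem h₁ h₂
  have h3 := h (w₁ - w₂) hd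
  have e1 : T.Q (w₁ - w₂) (w₁ - w₂) = T.Q w₁ (w₁ - w₂) - T.Q w₂ (w₁ - w₂) := T.sub_left _ _ _
  have e2 : ⟪w₁ - w₂, w₁ - w₂⟫ = ⟪w₁, w₁ - w₂⟫ - ⟪w₂, w₁ - w₂⟫ := inner_sub_left _ _ _
  have e3 : (0:ℝ) ≤ ⟪w₁ - w₂, w₁ - w₂⟫ := real_inner_self_nonneg
  have e4 : (0:ℝ) ≤ T.Q (w₁ - w₂) (w₁ - w₂) := T.nonneg _
  have e5 : ⟪w₁ - w₂, w₁ - w₂⟫ = 0 := by nlinarith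
  have e6 : w₁ - w₂ = 0 := by
    have := inner_self_eq_zero (𝕜 := ℝ) (x := w₁ - w₂)
    exact this.mp e5
  rw [sub_eq_zero] at e6; exact e6

lemma res_rel (hG : T.IsResolvent G) {α : ℝ} (hα : 0 < α) (u : Lp ℝ 2 μ)
    {v : Lp ℝ 2 μ} (hv : v ∈ T.dom) :
    T.Q (α • G α u) v = α * ⟪u - α • G α u, v⟫ := by
  have h := ((hG α hα u).2 v hv)
  have h2 : T.Q (G α u) v = ⟪u, v⟫ - α * ⟪G α u, v⟫ := by linarith
  rw [T.smul_left, h2, inner_sub_left, real_inner_smul_left]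

lemma res_smul_mem (hG : T.IsResolvent G) {α : ℝ} (hα : 0 < α) (u : Lp ℝ 2 μ) :
    α • G α u ∈ T.dom := T.dom.smul_mem _ (hG α hα u).1

lemma res_eq (hG : T.IsResolvent G) {α β : ℝ} (hα : 0 < α) (hβ : 0 < β) (u : Lp ℝ 2 μ) :
    G α u - G β u = (β - α) • G α (G β u) := by
  apply res_unique T hα (T.dom.sub_mem (hG α hα u).1 (hG β hβ u).1)
    (T.dom.smul_mem _ (hG α hα _).1)
  intro v hv
  have h1 := (hG α hα u).2 v hv
  have h2 := (hG β hβ u).2 v hv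
  have h3 := (hG α hα (G β u)).2 v hv
  rw [T.sub_left, inner_sub_left, T.smul_left, real_inner_smul_left]
  linear_combination h1 - h2 - (β - α) * h3

end Res

section Approx

variable {T : WideForm μ} {G : ℝ → Lp ℝ 2 μ →L[ℝ] Lp ℝ 2 μ}

lemma approx_all (hG : T.IsResolvent G) (u : Lp ℝ 2 μ) (hu : u ∈ T.dom) :
    (∀ ε > 0, ∃ N : ℕ, ∀ m ≥ N, ∀ n ≥ N,
      T.Q ((((m:ℝ)+1) • G ((m:ℝ)+1) u) - (((n:ℝ)+1) • G ((n:ℝ)+1) u))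
          ((((m:ℝ)+1) • G ((m:ℝ)+1) u) - (((n:ℝ)+1) • G ((n:ℝ)+1) u))
        + ‖(((m:ℝ)+1) • G ((m:ℝ)+1) u) - (((n:ℝ)+1) • G ((n:ℝ)+1) u)‖ ^ 2 < ε) ∧
    (∀ n : ℕ, ‖u - ((n:ℝ)+1) • G ((n:ℝ)+1) u‖ ^ 2 ≤ T.Q u u / ((n:ℝ)+1)) := by
  set W : ℝ → Lp ℝ 2 μ := fun α => α • G α u with hW
  set E : ℝ → ℝ := fun α => α * ⟪u - W α, u⟫ with hE
  -- F1 : relation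
  have F1 : ∀ {α : ℝ}, 0 < α → ∀ v ∈ T.dom, T.Q (W α) v = α * ⟪u - W α, v⟫ := by
    intro α hα v hv; exact res_rel hG hα u hv
  have Wmem : ∀ {α : ℝ}, 0 < α → W α ∈ T.dom := fun hα => res_smul_mem hG hα u
  -- F2
  have F2 : ∀ {α : ℝ}, 0 < α →
      E α = α * ⟪u - W α, u - W α⟫ + T.Q (W α) (W α) := by
    intro α hα
    have h1 : T.Q (W α) (W α) = α * ⟪u - W α, W α⟫ := F1 hα _ (Wmem hα)
    have h2 : ⟪u - W α, u⟫ = ⟪u - W α, u - W α⟫ + ⟪u - W α, W α⟫ := by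
      rw [← inner_add_right]; congr 1; abel
    rw [hE]; simp only []
    rw [h2, h1]; ring
  have innn : ∀ x : Lp ℝ 2 μ, (0:ℝ) ≤ ⟪x, x⟫ := fun x => real_inner_self_nonneg
  have F3a : ∀ {α : ℝ}, 0 < α → T.Q (W α) (W α) ≤ E α := by
    intro α hα; have := F2 hα; nlinarith [innn (u - W α)]
  have F3b : ∀ {α : ℝ}, 0 < α → α * ⟪u - W α, u - W α⟫ ≤ E α := by
    intro α hα; have := F2 hα; nlinarith [T.nonneg (W α)]
  -- F4 minimality
  have F4 : ∀ {α : ℝ}, 0 < α → ∀ v ∈ T.dom, E α ≤ T.Q v v + α * ⟪u - v, u - v⟫ := by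
    intro α hα v hv
    have hd : v - W α ∈ T.dom := T.dom.sub_mem hv (Wmem hα)
    have hQ : T.Q v v = T.Q (W α) (W α) + 2 * T.Q (W α) (v - W α) + T.Q (v - W α) (v - W α) := by
      have hv' : W α + (v - W α) = v := by abel
      calc T.Q v v = T.Q (W α + (v - W α)) (W α + (v - W α)) := by rw [hv']
        _ = _ := by
            rw [T.add_left, T.add_right, T.add_right, T.symm (v - W α) (W α)]; ring
    have hI : ⟪u - v, u - v⟫ = ⟪u - W α, u - W α⟫ - 2 * ⟪u - W α, v - W α⟫
        + ⟪v - W α, v - W α⟫ := by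
      have hv' : u - v = (u - W α) - (v - W α) := by abel
      rw [hv', inner_sub_left,
        inner_sub_right (𝕜 := ℝ) (u - W α) (u - W α) (v - W α),
        inner_sub_right (𝕜 := ℝ) (v - W α) (u - W α) (v - W α),
        real_inner_comm (v - W α) (u - W α)]
      ring
    have hrel : T.Q (W α) (v - W α) = α * ⟪u - W α, v - W α⟫ := F1 hα _ hd
    have := F2 hα
    nlinarith [T.nonneg (v - W α), innn (v - W α)]
  -- F5 monotone
  have F5 : ∀ {γ β : ℝ}, 0 < γ → γ ≤ β → E γ ≤ E β := by
    intro γ β hγ hγβ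
    have hβ : 0 < β := lt_of_lt_of_le hγ hγβ
    have h1 := F4 hγ _ (Wmem hβ)
    have h2 := F2 hβ
    nlinarith [innn (u - W β)]
  -- F6
  have F6 : ∀ {α : ℝ}, 0 < α → E α ≤ T.Q u u := by
    intro α hα
    have h := F4 hα u hu
    simpa using h
  -- F7
  have F7 : ∀ {α β : ℝ}, 0 < α → 0 < β →
      T.Q (W α) (W β) = E β - β * ⟪u - W β, u - W α⟫ := by
    intro α β hα hβ
    have h1 : T.Q (W β) (W α) = β * ⟪u - W β, W α⟫ := F1 hβ _ (Wmem hα)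
    have h2 : ⟪u - W β, W α⟫ = ⟪u - W β, u⟫ - ⟪u - W β, u - W α⟫ := by
      rw [← inner_sub_right]; congr 1; abel
    rw [T.symm, h1, h2, hE]; ring
  -- positivity C2
  have C2 : ∀ {α : ℝ}, 0 < α → ∀ v : Lp ℝ 2 μ, (0:ℝ) ≤ ⟪v - α • G α v, v⟫ := by
    intro α hα v
    have hz : T.Q (α • G α v) (α • G α v) = α * ⟪v - α • G α v, α • G α v⟫ :=
      res_rel hG hα v (res_smul_mem hG hα v)
    have h1 : (0:ℝ) ≤ ⟪v - α • G α v, α • G α v⟫ := by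
      nlinarith [T.nonneg (α • G α v)]
    have h2 : ⟪v - α • G α v, v⟫ = ⟪v - α • G α v, v - α • G α v⟫
        + ⟪v - α • G α v, α • G α v⟫ := by
      rw [← inner_add_right]; congr 1; abel
    rw [h2]; have := innn (v - α • G α v); linarith
  -- F8 : P bound
  have F8 : ∀ {α : ℝ}, 0 < α → α * ⟪u - W α, u - W α⟫ ≤ 2 * (E (2*α) - E α) := by
    intro α hα
    have h2α : (0:ℝ) < 2*α := by linarith
    -- resolvent equation consequence
    have hre : G α u - G (2*α) u = α • G (2*α) (G α u) := by
      have h := res_eq hG h2α hα u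
      rw [show (α - 2*α) = -α by ring] at h
      have := congrArg (fun z => -z) h
      simp only [neg_sub, neg_smul] at this
      rw [this]; rw [neg_neg]
    have C1 : u - W (2*α) - (2⁻¹:ℝ) • (u - W α)
        = (2⁻¹:ℝ) • ((u - W α) - (2*α) • G (2*α) (u - W α)) := by
      have hmap : G (2*α) (u - α • G α u) = G (2*α) u - α • G (2*α) (G α u) := by
        rw [map_sub, ContinuousLinearMap.map_smul]
      rw [hW]; simp only []
      rw [hmap, ← hre]
      module
    -- E(2α) - E α = α ⟪u - W 2α, u - W α⟫
    have hdiff : E (2*α) - E α = α * ⟪u - W (2*α), u - W α⟫ := by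
      have h1 := F7 h2α hα   -- Q(W 2α, W α)? careful orders
      have h2 := F7 hα h2α
      -- h1 : T.Q (W (2α)) (W α) = E α - α ⟪u - W α, u - W 2α⟫  (α:=2α, β:=α)
      -- h2 : T.Q (W α) (W (2α)) = E (2α) - 2α ⟪u - W 2α, u - W α⟫
      rw [T.symm] at h1
      rw [real_inner_comm] at h1
      linarith [h1, h2]
    have hpos : (0:ℝ) ≤ ⟪u - W (2*α), u - W α⟫ - 2⁻¹ * ⟪u - W α, u - W α⟫ := by
      have hc2 := C2 h2α (u - W α)
      have : ⟪u - W (2*α) - (2⁻¹:ℝ) • (u - W α), u - W α⟫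
          = ⟪u - W (2*α), u - W α⟫ - 2⁻¹ * ⟪u - W α, u - W α⟫ := by
        rw [inner_sub_left, real_inner_smul_left]
      rw [← this, C1, real_inner_smul_left]
      have h3 : ⟪u - W α - (2*α) • G (2*α) (u - W α), u - W α⟫ ≥ 0 := hc2
      linarith
    nlinarith [hdiff, hpos, hα.le]
  -- sequence versions
  have ha : ∀ n : ℕ, (0:ℝ) < (n:ℝ)+1 := fun n => by positivity
  have ha1 : ∀ n : ℕ, (1:ℝ) ≤ (n:ℝ)+1 := fun n => by
    have : (0:ℝ) ≤ (n:ℝ) := Nat.cast_nonneg n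
    linarith
  set e : ℕ → ℝ := fun n => E ((n:ℝ)+1) with he
  set P : ℕ → ℝ := fun n => ((n:ℝ)+1) * ⟪u - W ((n:ℝ)+1), u - W ((n:ℝ)+1)⟫ with hP'
  have hmono : ∀ {m n : ℕ}, m ≤ n → e m ≤ e n := by
    intro m n hmn
    apply F5 (ha m)
    have h := Nat.cast_le (α := ℝ) |>.mpr hmn
    linarith
  have hub : ∀ n, e n ≤ T.Q u u := fun n => F6 (ha n)
  have bdd : BddAbove (Set.range e) := ⟨T.Q u u, by rintro x ⟨n, rfl⟩; exact hub n⟩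
  set L : ℝ := ⨆ n, e n with hL
  have hLe : ∀ n, e n ≤ L := fun n => le_ciSup bdd n
  have hPB : ∀ n, P n ≤ 2*(L - e n) := by
    intro n
    have h8 := F8 (ha n)
    have hcast : (2:ℝ) * ((n:ℝ)+1) = ((2*n+1 : ℕ):ℝ) + 1 := by push_cast; ring
    rw [hcast] at h8
    have : E (((2*n+1 : ℕ):ℝ) + 1) ≤ L := hLe (2*n+1)
    have h0 : P n ≤ 2 * (E (((2*n+1:ℕ):ℝ)+1) - e n) := h8
    linarith
  have hPnn : ∀ n, 0 ≤ P n := fun n =>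
    mul_nonneg (ha n).le (innn _)
  -- F9 : main bound for n <= m
  have F9 : ∀ m n : ℕ, n ≤ m →
      T.Q (W ((m:ℝ)+1) - W ((n:ℝ)+1)) (W ((m:ℝ)+1) - W ((n:ℝ)+1))
        + ‖W ((m:ℝ)+1) - W ((n:ℝ)+1)‖ ^ 2 ≤ (e m - e n) + 3*P m + 3*P n := by
    intro m n hnm
    have hβα : ((n:ℝ)+1) ≤ ((m:ℝ)+1) := by
      have h := Nat.cast_le (α := ℝ) |>.mpr hnm; linarith
    have hαp := ha m
    have hβp := ha n
    have q1 : T.Q (W ((m:ℝ)+1) - W ((n:ℝ)+1)) (W ((m:ℝ)+1) - W ((n:ℝ)+1))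
        = T.Q (W ((m:ℝ)+1)) (W ((m:ℝ)+1)) - 2 * T.Q (W ((m:ℝ)+1)) (W ((n:ℝ)+1))
          + T.Q (W ((n:ℝ)+1)) (W ((n:ℝ)+1)) := by
      rw [T.sub_left, T.sub_right, T.sub_right, T.symm (W ((n:ℝ)+1)) (W ((m:ℝ)+1))]; ring
    have q2 : T.Q (W ((m:ℝ)+1)) (W ((n:ℝ)+1))
        = E ((n:ℝ)+1) - ((n:ℝ)+1) * ⟪u - W ((n:ℝ)+1), u - W ((m:ℝ)+1)⟫ := F7 hαp hβp
    have hcs := real_inner_le_norm (u - W ((n:ℝ)+1)) (u - W ((m:ℝ)+1))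
    have e1 : ⟪u - W ((n:ℝ)+1), u - W ((n:ℝ)+1)⟫ = ‖u - W ((n:ℝ)+1)‖^2 :=
      real_inner_self_eq_norm_sq _
    have e2 : ⟪u - W ((m:ℝ)+1), u - W ((m:ℝ)+1)⟫ = ‖u - W ((m:ℝ)+1)‖^2 :=
      real_inner_self_eq_norm_sq _
    have hPn : P n = ((n:ℝ)+1) * ‖u - W ((n:ℝ)+1)‖^2 := by
      simp only [hP']; rw [e1]
    have hPm : P m = ((m:ℝ)+1) * ‖u - W ((m:ℝ)+1)‖^2 := by
      simp only [hP']; rw [e2]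
    have q3 : ((n:ℝ)+1) * ⟪u - W ((n:ℝ)+1), u - W ((m:ℝ)+1)⟫ ≤ (P n + P m)/2 := by
      have t1 : ((n:ℝ)+1) * ⟪u - W ((n:ℝ)+1), u - W ((m:ℝ)+1)⟫
          ≤ ((n:ℝ)+1) * (‖u - W ((n:ℝ)+1)‖ * ‖u - W ((m:ℝ)+1)‖) :=
        mul_le_mul_of_nonneg_left hcs hβp.le
      have t2 : (0:ℝ) ≤ ((n:ℝ)+1) * ((‖u - W ((n:ℝ)+1)‖ - ‖u - W ((m:ℝ)+1)‖)^2) :=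
        mul_nonneg hβp.le (sq_nonneg _)
      have t3 : (0:ℝ) ≤ (((m:ℝ)+1) - ((n:ℝ)+1)) * ‖u - W ((m:ℝ)+1)‖^2 :=
        mul_nonneg (by linarith) (sq_nonneg _)
      rw [hPn, hPm]
      nlinarith [t1, t2, t3]
    have q4a : T.Q (W ((m:ℝ)+1)) (W ((m:ℝ)+1)) ≤ e m := F3a hαp
    have q4b : T.Q (W ((n:ℝ)+1)) (W ((n:ℝ)+1)) ≤ e n := F3a hβp
    have q5 : ‖W ((m:ℝ)+1) - W ((n:ℝ)+1)‖ ≤ ‖u - W ((m:ℝ)+1)‖ + ‖u - W ((n:ℝ)+1)‖ := by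
      have habel : W ((m:ℝ)+1) - W ((n:ℝ)+1) = (u - W ((n:ℝ)+1)) - (u - W ((m:ℝ)+1)) := by
        abel
      rw [habel]
      calc ‖(u - W ((n:ℝ)+1)) - (u - W ((m:ℝ)+1))‖
          ≤ ‖u - W ((n:ℝ)+1)‖ + ‖u - W ((m:ℝ)+1)‖ := norm_sub_le _ _
        _ = ‖u - W ((m:ℝ)+1)‖ + ‖u - W ((n:ℝ)+1)‖ := by ring
    have q6a : ‖u - W ((m:ℝ)+1)‖^2 ≤ P m := by
      rw [hPm]; nlinarith [sq_nonneg (‖u - W ((m:ℝ)+1)‖), ha1 m]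
    have q6b : ‖u - W ((n:ℝ)+1)‖^2 ≤ P n := by
      rw [hPn]; nlinarith [sq_nonneg (‖u - W ((n:ℝ)+1)‖), ha1 n]
    have q7 : ‖W ((m:ℝ)+1) - W ((n:ℝ)+1)‖^2 ≤ 2*P m + 2*P n := by
      nlinarith [q5, norm_nonneg (W ((m:ℝ)+1) - W ((n:ℝ)+1)),
        norm_nonneg (u - W ((m:ℝ)+1)), norm_nonneg (u - W ((n:ℝ)+1)), q6a, q6b,
        sq_nonneg (‖u - W ((m:ℝ)+1)‖ - ‖u - W ((n:ℝ)+1)‖)]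
    have hEn : E ((n:ℝ)+1) = e n := rfl
    have c1 : T.Q (W ((m:ℝ)+1) - W ((n:ℝ)+1)) (W ((m:ℝ)+1) - W ((n:ℝ)+1))
        ≤ e m - e n + P n + P m := by
      linarith [q1, q2, q3, q4a, q4b, hEn]
    linarith [c1, q7]
  constructor
  · intro ε hε
    have hδ : (0:ℝ) < ε/13 := by linarith
    obtain ⟨N, hN⟩ : ∃ N, L - ε/13 < e N := by
      rcases exists_lt_of_lt_ciSup (show L - ε/13 < L by linarith) with ⟨N, hN⟩
      exact ⟨N, hN⟩
    refine ⟨N, ?_⟩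
    intro m hm n hn
    have key : ∀ m' n' : ℕ, n' ≤ m' → N ≤ n' →
        T.Q (W ((m':ℝ)+1) - W ((n':ℝ)+1)) (W ((m':ℝ)+1) - W ((n':ℝ)+1))
          + ‖W ((m':ℝ)+1) - W ((n':ℝ)+1)‖ ^ 2 < ε := by
      intro m' n' hn'm' hNn'
      have h9 := F9 m' n' hn'm'
      have h1 : e m' - e n' ≤ L - e N := by
        have := hLe m'; have := hmono hNn'; linarith
      have h2 : P m' ≤ 2*(L - e N) := by
        have := hPB m'
        have : e N ≤ e m' := hmono (le_trans hNn' hn'm')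
        have := hPB m'; linarith [hmono (le_trans hNn' hn'm')]
      have h3 : P n' ≤ 2*(L - e N) := by
        have := hPB n'; linarith [hmono hNn']
      have hLN : L - e N < ε/13 := by linarith
      linarith
    rcases le_total n m with h | h
    · exact key m n h hn
    · have hsym : W ((m:ℝ)+1) - W ((n:ℝ)+1) = -(W ((n:ℝ)+1) - W ((m:ℝ)+1)) := by abel
      have hQneg : ∀ x : Lp ℝ 2 μ, T.Q (-x) (-x) = T.Q x x := by
        intro x
        rw [show -x = (-1:ℝ) • x by module, T.smul_left, T.smul_right]; ring
      rw [hsym, hQneg, norm_neg]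
      exact key n m h hm
  · intro n
    have h1 := F3b (ha n)
    have h2 := F6 (ha n)
    have e1 : ⟪u - W ((n:ℝ)+1), u - W ((n:ℝ)+1)⟫ = ‖u - W ((n:ℝ)+1)‖^2 :=
      real_inner_self_eq_norm_sq _
    rw [le_div_iff₀ (ha n)]
    nlinarith

end Approx

section Core
variable {T : WideForm μ} {G : ℝ → Lp ℝ 2 μ →L[ℝ] Lp ℝ 2 μ}

lemma WideForm.negQ (T : WideForm μ) (x : Lp ℝ 2 μ) : T.Q (-x) (-x) = T.Q x x := by
  rw [show -x = (-1:ℝ) • x by module, T.smul_left, T.smul_right]; ring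

lemma WideForm.Q_le_two (T : WideForm μ) (x y : Lp ℝ 2 μ) :
    T.Q x x ≤ 2 * T.Q (x - y) (x - y) + 2 * T.Q y y := by
  have h1 : T.Q x x = T.Q (x - y) (x - y) + 2 * T.Q (x - y) y + T.Q y y := by
    have hx : (x - y) + y = x := by abel
    calc T.Q x x = T.Q ((x - y) + y) ((x - y) + y) := by rw [hx]
      _ = _ := by rw [T.add_left, T.add_right, T.add_right, T.symm y (x - y)]; ring
  have h2 : 0 ≤ T.Q ((x - y) - y) ((x - y) - y) := T.nonneg _
  have h3 : T.Q ((x - y) - y) ((x - y) - y)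
      = T.Q (x - y) (x - y) - 2 * T.Q (x - y) y + T.Q y y := by
    rw [T.sub_left, T.sub_right (x - y) (x - y) y, T.sub_right y (x - y) y,
      T.symm y (x - y)]; ring
  linarith

lemma napos (n : ℕ) : (0:ℝ) < (n:ℝ)+1 := by positivity

lemma ind_seq (hG : T.IsResolvent G) {C : Set X} (hC : MeasurableSet C)
    (hCc : ∀ α > 0, ∀ f, G α (indMul C f) = indMul C (G α f)) (u : Lp ℝ 2 μ) (n : ℕ) :
    indMul C (((n:ℝ)+1) • G ((n:ℝ)+1) u) = ((n:ℝ)+1) • G ((n:ℝ)+1) (indMul C u) := by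
  rw [indMul_smul hC, ← hCc _ (napos n) u]

lemma ind_pair (hG : T.IsResolvent G) {C : Set X} (hC : MeasurableSet C)
    (hCc : ∀ α > 0, ∀ f, G α (indMul C f) = indMul C (G α f)) (u : Lp ℝ 2 μ)
    {v : Lp ℝ 2 μ} (hv : v ∈ T.dom) (n : ℕ) :
    T.Q (indMul C (((n:ℝ)+1) • G ((n:ℝ)+1) u)) v
      = ((n:ℝ)+1) * ⟪indMul C (u - ((n:ℝ)+1) • G ((n:ℝ)+1) u), v⟫ := by
  rw [ind_seq hG hC hCc u n, res_rel hG (napos n) (indMul C u) hv,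
    ← ind_seq hG hC hCc u n, ← indMul_sub hC]

lemma ind_mem (hG : T.IsResolvent G) {C : Set X} (hC : MeasurableSet C)
    (hCc : ∀ α > 0, ∀ f, G α (indMul C f) = indMul C (G α f)) (u : Lp ℝ 2 μ) (n : ℕ) :
    indMul C (((n:ℝ)+1) • G ((n:ℝ)+1) u) ∈ T.dom := by
  rw [ind_seq hG hC hCc u n]; exact res_smul_mem hG (napos n) _

/-- Key subclaim: for an invariant set `C`, `indMul C u` is in the domain and the
smoothed indicators converge to it in form norm. -/
lemma key_claim (hG : T.IsResolvent G) {C : Set X} (hC : MeasurableSet C)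
    (hCc : ∀ α > 0, ∀ f, G α (indMul C f) = indMul C (G α f)) (u : Lp ℝ 2 μ)
    (hu : u ∈ T.dom) :
    indMul C u ∈ T.dom ∧
    ∀ ε > 0, ∃ N : ℕ, ∀ n ≥ N,
      T.Q (indMul C (((n:ℝ)+1) • G ((n:ℝ)+1) u) - indMul C u)
          (indMul C (((n:ℝ)+1) • G ((n:ℝ)+1) u) - indMul C u) < ε := by
  obtain ⟨cau, nrm⟩ := approx_all hG u hu
  have hfmem : ∀ n : ℕ, indMul C (((n:ℝ)+1) • G ((n:ℝ)+1) u) ∈ T.dom :=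
    ind_mem hG hC hCc u
  -- Q difference bound
  have hfsub : ∀ m n : ℕ,
      indMul C (((m:ℝ)+1) • G ((m:ℝ)+1) u) - indMul C (((n:ℝ)+1) • G ((n:ℝ)+1) u)
        = indMul C ((((m:ℝ)+1) • G ((m:ℝ)+1) u) - (((n:ℝ)+1) • G ((n:ℝ)+1) u)) :=
    fun m n => (indMul_sub hC _ _).symm
  have hbound : ∀ m n : ℕ,
      T.Q (indMul C (((m:ℝ)+1) • G ((m:ℝ)+1) u) - indMul C (((n:ℝ)+1) • G ((n:ℝ)+1) u))
          (indMul C (((m:ℝ)+1) • G ((m:ℝ)+1) u) - indMul C (((n:ℝ)+1) • G ((n:ℝ)+1) u))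
        ≤ T.Q ((((m:ℝ)+1) • G ((m:ℝ)+1) u) - (((n:ℝ)+1) • G ((n:ℝ)+1) u))
            ((((m:ℝ)+1) • G ((m:ℝ)+1) u) - (((n:ℝ)+1) • G ((n:ℝ)+1) u)) := by
    intro m n
    set h := indMul C (((m:ℝ)+1) • G ((m:ℝ)+1) u) - indMul C (((n:ℝ)+1) • G ((n:ℝ)+1) u)
      with hh
    have hmem : h ∈ T.dom := T.dom.sub_mem (hfmem m) (hfmem n)
    have hCh : indMul C h = h := by
      rw [hh, hfsub, indMul_idem hC]
    have key : T.Q h h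
        = T.Q ((((m:ℝ)+1) • G ((m:ℝ)+1) u) - (((n:ℝ)+1) • G ((n:ℝ)+1) u)) h := by
      have p1 := ind_pair hG hC hCc u hmem m
      have p2 := ind_pair hG hC hCc u hmem n
      have r1 := res_rel hG (napos m) u hmem
      have r2 := res_rel hG (napos n) u hmem
      have i1 : ⟪indMul C (u - ((m:ℝ)+1) • G ((m:ℝ)+1) u), h⟫
          = ⟪u - ((m:ℝ)+1) • G ((m:ℝ)+1) u, h⟫ := by
        rw [inner_indMul hC, hCh]
      have i2 : ⟪indMul C (u - ((n:ℝ)+1) • G ((n:ℝ)+1) u), h⟫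
          = ⟪u - ((n:ℝ)+1) • G ((n:ℝ)+1) u, h⟫ := by
        rw [inner_indMul hC, hCh]
      calc T.Q h h = T.Q (indMul C (((m:ℝ)+1) • G ((m:ℝ)+1) u)) h
            - T.Q (indMul C (((n:ℝ)+1) • G ((n:ℝ)+1) u)) h := by
            rw [hh, T.sub_left]
        _ = ((m:ℝ)+1) * ⟪u - ((m:ℝ)+1) • G ((m:ℝ)+1) u, h⟫
            - ((n:ℝ)+1) * ⟪u - ((n:ℝ)+1) • G ((n:ℝ)+1) u, h⟫ := by rw [p1, p2, i1, i2]
        _ = T.Q (((m:ℝ)+1) • G ((m:ℝ)+1) u) h - T.Q (((n:ℝ)+1) • G ((n:ℝ)+1) u) h := by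
            rw [r1, r2]
        _ = _ := by rw [T.sub_left]
    exact T.le_of_eq_pair key
  have hnormb : ∀ m n : ℕ,
      ‖indMul C (((m:ℝ)+1) • G ((m:ℝ)+1) u) - indMul C (((n:ℝ)+1) • G ((n:ℝ)+1) u)‖
        ≤ ‖(((m:ℝ)+1) • G ((m:ℝ)+1) u) - (((n:ℝ)+1) • G ((n:ℝ)+1) u)‖ := by
    intro m n; rw [hfsub]; exact norm_indMul_le hC _
  -- closedness
  obtain ⟨g, hgmem, hgten⟩ := T.closed _ hfmem (by
    intro ε hε
    obtain ⟨N, hN⟩ := cau ε hε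
    refine ⟨N, fun m hm n hn => ?_⟩
    have h1 := hbound m n
    have h2 := hnormb m n
    have h3 := hN m hm n hn
    have h4 : ‖indMul C (((m:ℝ)+1) • G ((m:ℝ)+1) u) - indMul C (((n:ℝ)+1) • G ((n:ℝ)+1) u)‖^2
        ≤ ‖(((m:ℝ)+1) • G ((m:ℝ)+1) u) - (((n:ℝ)+1) • G ((n:ℝ)+1) u)‖^2 := by
      nlinarith [norm_nonneg (indMul C (((m:ℝ)+1) • G ((m:ℝ)+1) u)
        - indMul C (((n:ℝ)+1) • G ((n:ℝ)+1) u))]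
    linarith)
  -- ε-N version of the limit
  have hlim : ∀ ε > 0, ∃ N : ℕ, ∀ n ≥ N,
      T.Q (indMul C (((n:ℝ)+1) • G ((n:ℝ)+1) u) - g)
          (indMul C (((n:ℝ)+1) • G ((n:ℝ)+1) u) - g)
        + ‖indMul C (((n:ℝ)+1) • G ((n:ℝ)+1) u) - g‖^2 < ε := by
    intro ε hε
    have := Metric.tendsto_atTop.mp hgten ε hε
    obtain ⟨N, hN⟩ := this
    refine ⟨N, fun n hn => ?_⟩
    have h := hN n hn
    rw [Real.dist_eq, sub_zero] at h
    calc T.Q _ _ + _ ≤ |T.Q (indMul C (((n:ℝ)+1) • G ((n:ℝ)+1) u) - g)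
          (indMul C (((n:ℝ)+1) • G ((n:ℝ)+1) u) - g)
        + ‖indMul C (((n:ℝ)+1) • G ((n:ℝ)+1) u) - g‖^2| := le_abs_self _
      _ < ε := h
  -- identify the limit
  have hgl : g = indMul C u := by
    by_contra hne
    have hpos : 0 < ‖g - indMul C u‖ := by
      rw [norm_pos_iff]; exact sub_ne_zero.mpr hne
    set ε0 := ‖g - indMul C u‖ with hε0
    obtain ⟨N₁, hN₁⟩ := hlim ((ε0/2)^2) (by positivity)
    -- choose n ≥ N₁ with T.Q u u / (n+1) < (ε0/2)^2
    obtain ⟨N₂, hN₂⟩ := exists_nat_gt (T.Q u u / (ε0/2)^2)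
    set n := max N₁ N₂ with hn
    have hn1 : N₁ ≤ n := le_max_left _ _
    have hn2 : (N₂:ℝ) ≤ (n:ℝ) := Nat.cast_le.mpr (le_max_right _ _)
    have hA : ‖indMul C (((n:ℝ)+1) • G ((n:ℝ)+1) u) - g‖ < ε0/2 := by
      have h := hN₁ n hn1
      have h2 : ‖indMul C (((n:ℝ)+1) • G ((n:ℝ)+1) u) - g‖^2 < (ε0/2)^2 := by
        nlinarith [T.nonneg (indMul C (((n:ℝ)+1) • G ((n:ℝ)+1) u) - g)]
      nlinarith [norm_nonneg (indMul C (((n:ℝ)+1) • G ((n:ℝ)+1) u) - g), hpos]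
    have hB : ‖indMul C (((n:ℝ)+1) • G ((n:ℝ)+1) u) - indMul C u‖ < ε0/2 := by
      have h1 : indMul C (((n:ℝ)+1) • G ((n:ℝ)+1) u) - indMul C u
          = indMul C ((((n:ℝ)+1) • G ((n:ℝ)+1) u) - u) := (indMul_sub hC _ _).symm
      have h2 : ‖(((n:ℝ)+1) • G ((n:ℝ)+1) u) - u‖^2 ≤ T.Q u u / ((n:ℝ)+1) := by
        rw [show (((n:ℝ)+1) • G ((n:ℝ)+1) u) - u = -(u - ((n:ℝ)+1) • G ((n:ℝ)+1) u) by abel,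
          norm_neg]
        exact nrm n
      have h3 : T.Q u u / ((n:ℝ)+1) < (ε0/2)^2 := by
        rw [div_lt_iff₀ (napos n)]
        have hQnn := T.nonneg u
        have : T.Q u u / (ε0/2)^2 < (n:ℝ)+1 := by linarith [hN₂, hn2]
        rw [div_lt_iff₀ (by positivity)] at this
        nlinarith
      have h4 : ‖indMul C ((((n:ℝ)+1) • G ((n:ℝ)+1) u) - u)‖
          ≤ ‖(((n:ℝ)+1) • G ((n:ℝ)+1) u) - u‖ := norm_indMul_le hC _
      rw [h1]
      nlinarith [norm_nonneg (indMul C ((((n:ℝ)+1) • G ((n:ℝ)+1) u) - u)),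
        norm_nonneg ((((n:ℝ)+1) • G ((n:ℝ)+1) u) - u), hpos]
    have htri : ε0 ≤ ‖indMul C (((n:ℝ)+1) • G ((n:ℝ)+1) u) - g‖
        + ‖indMul C (((n:ℝ)+1) • G ((n:ℝ)+1) u) - indMul C u‖ := by
      have : g - indMul C u = -(indMul C (((n:ℝ)+1) • G ((n:ℝ)+1) u) - g)
          + (indMul C (((n:ℝ)+1) • G ((n:ℝ)+1) u) - indMul C u) := by abel
      rw [hε0, this]
      calc ‖_ + _‖ ≤ ‖-(indMul C (((n:ℝ)+1) • G ((n:ℝ)+1) u) - g)‖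
          + ‖indMul C (((n:ℝ)+1) • G ((n:ℝ)+1) u) - indMul C u‖ := norm_add_le _ _
        _ = _ := by rw [norm_neg]
    linarith
  rw [hgl] at hgmem hlim
  refine ⟨hgmem, fun ε hε => ?_⟩
  obtain ⟨N, hN⟩ := hlim ε hε
  refine ⟨N, fun n hn => ?_⟩
  have h := hN n hn
  nlinarith [sq_nonneg (‖indMul C (((n:ℝ)+1) • G ((n:ℝ)+1) u) - indMul C u‖)]

end Core

section Core2
variable {T : WideForm μ} {G : ℝ → Lp ℝ 2 μ →L[ℝ] Lp ℝ 2 μ}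

lemma compl_comm (hB : ResInvariant G B) :
    ∀ α > 0, ∀ f, G α (indMul Bᶜ f) = indMul Bᶜ (G α f) := by
  intro α hα f
  have h1 : indMul Bᶜ f = f - indMul B f := by
    have := indMul_add_compl hB.1 f
    linear_combination (norm := module) this
  have h2 : indMul Bᶜ (G α f) = G α f - indMul B (G α f) := by
    have := indMul_add_compl hB.1 (G α f)
    linear_combination (norm := module) this
  rw [h1, h2, map_sub, hB.2 α hα f]

lemma invariant_core (hG : T.IsResolvent G) {B : Set X} (hB : ResInvariant G B)
    {u : Lp ℝ 2 μ} (hu : u ∈ T.dom) :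
    indMul B u ∈ T.dom ∧ indMul Bᶜ u ∈ T.dom ∧ T.Q (indMul B u) (indMul Bᶜ u) = 0 := by
  obtain ⟨hBm, hBc⟩ := hB
  have hBcc := compl_comm ⟨hBm, hBc⟩
  obtain ⟨hmB, convB⟩ := key_claim hG hBm hBc u hu
  obtain ⟨hmBc, convBc⟩ := key_claim hG hBm.compl hBcc u hu
  refine ⟨hmB, hmBc, ?_⟩
  -- cross terms vanish along the sequence
  have hzero : ∀ n : ℕ,
      T.Q (indMul B (((n:ℝ)+1) • G ((n:ℝ)+1) u)) (indMul Bᶜ (((n:ℝ)+1) • G ((n:ℝ)+1) u))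
        = 0 := by
    intro n
    have hv : indMul Bᶜ (((n:ℝ)+1) • G ((n:ℝ)+1) u) ∈ T.dom :=
      ind_mem hG hBm.compl hBcc u n
    rw [ind_pair hG hBm hBc u hv n]
    have h1 : ⟪indMul B (u - ((n:ℝ)+1) • G ((n:ℝ)+1) u),
        indMul Bᶜ (((n:ℝ)+1) • G ((n:ℝ)+1) u)⟫ = 0 := by
      rw [inner_indMul hBm, indMul_indMul hBm hBm.compl, Set.inter_compl_self,
        indMul_empty, inner_zero_right]
    rw [h1, mul_zero]
  -- bound Q(fB n) via Q_le_two
  set bu := indMul B u with hbu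
  set bcu := indMul Bᶜ u with hbcu
  -- final ε-argument
  have habs : ∀ ε > 0, |T.Q bu bcu| < ε := by
    intro ε hε
    set S : ℝ := Real.sqrt (T.Q bcu bcu) + Real.sqrt (2 + 2 * T.Q bu bu) + 1 with hS
    have hS1 : 1 ≤ S := by
      have := Real.sqrt_nonneg (T.Q bcu bcu)
      have := Real.sqrt_nonneg (2 + 2 * T.Q bu bu)
      rw [hS]; linarith
    have hSpos : 0 < S := by linarith
    set δ : ℝ := min 1 ((ε/S)^2) with hδ
    have hδpos : 0 < δ := by
      apply lt_min one_pos; positivity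
    obtain ⟨N₁, hN₁⟩ := convB δ hδpos
    obtain ⟨N₂, hN₂⟩ := convBc δ hδpos
    set n := max N₁ N₂ with hn
    set fB := indMul B (((n:ℝ)+1) • G ((n:ℝ)+1) u) with hfB
    set fBc := indMul Bᶜ (((n:ℝ)+1) • G ((n:ℝ)+1) u) with hfBc
    have ha1 : T.Q (fB - bu) (fB - bu) < δ := hN₁ n (le_max_left _ _)
    have ha2 : T.Q (fBc - bcu) (fBc - bcu) < δ := hN₂ n (le_max_right _ _)
    have hdecomp : T.Q bu bcu = T.Q (bu - fB) bcu + T.Q fB (bcu - fBc) + T.Q fB fBc := by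
      rw [T.sub_left, T.sub_right]; ring
    have hz := hzero n
    rw [← hfB, ← hfBc] at hz
    -- |Q(bu - fB, bcu)| ≤ √δ * √(Q bcu bcu)
    have d1 : |T.Q (bu - fB) bcu| ≤ Real.sqrt δ * Real.sqrt (T.Q bcu bcu) := by
      have := T.abs_le (bu - fB) bcu
      have hQeq : T.Q (bu - fB) (bu - fB) = T.Q (fB - bu) (fB - bu) := by
        rw [show bu - fB = -(fB - bu) by abel, T.negQ]
      have hs : Real.sqrt (T.Q (bu - fB) (bu - fB)) ≤ Real.sqrt δ := by
        rw [hQeq]; exact Real.sqrt_le_sqrt ha1.le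
      calc |T.Q (bu - fB) bcu|
          ≤ Real.sqrt (T.Q (bu - fB) (bu - fB)) * Real.sqrt (T.Q bcu bcu) := this
        _ ≤ Real.sqrt δ * Real.sqrt (T.Q bcu bcu) :=
            mul_le_mul_of_nonneg_right hs (Real.sqrt_nonneg _)
    have d2 : |T.Q fB (bcu - fBc)| ≤ Real.sqrt (2 + 2 * T.Q bu bu) * Real.sqrt δ := by
      have habs2 := T.abs_le fB (bcu - fBc)
      have hfb2 : T.Q fB fB ≤ 2 * T.Q (fB - bu) (fB - bu) + 2 * T.Q bu bu := T.Q_le_two fB bu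
      have hfb3 : T.Q fB fB ≤ 2 + 2 * T.Q bu bu := by
        have : δ ≤ 1 := min_le_left _ _
        linarith
      have hs1 : Real.sqrt (T.Q fB fB) ≤ Real.sqrt (2 + 2 * T.Q bu bu) :=
        Real.sqrt_le_sqrt hfb3
      have hQeq : T.Q (bcu - fBc) (bcu - fBc) = T.Q (fBc - bcu) (fBc - bcu) := by
        rw [show bcu - fBc = -(fBc - bcu) by abel, T.negQ]
      have hs2 : Real.sqrt (T.Q (bcu - fBc) (bcu - fBc)) ≤ Real.sqrt δ := by
        rw [hQeq]; exact Real.sqrt_le_sqrt ha2.le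
      calc |T.Q fB (bcu - fBc)|
          ≤ Real.sqrt (T.Q fB fB) * Real.sqrt (T.Q (bcu - fBc) (bcu - fBc)) := habs2
        _ ≤ Real.sqrt (2 + 2 * T.Q bu bu) * Real.sqrt δ := by
            apply mul_le_mul hs1 hs2 (Real.sqrt_nonneg _) (Real.sqrt_nonneg _)
    have hsδ : Real.sqrt δ ≤ ε / S := by
      have h1 : δ ≤ (ε/S)^2 := min_le_right _ _
      have h2 : Real.sqrt ((ε/S)^2) = ε/S := by
        rw [Real.sqrt_sq (by positivity)]
      calc Real.sqrt δ ≤ Real.sqrt ((ε/S)^2) := Real.sqrt_le_sqrt h1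
        _ = ε/S := h2
    have hfinal : |T.Q bu bcu| ≤ (ε/S) * (S - 1) := by
      have htr : |T.Q bu bcu| ≤ |T.Q (bu - fB) bcu| + |T.Q fB (bcu - fBc)| := by
        rw [hdecomp, hz, add_zero]
        exact abs_add_le _ _
      have hb1 : Real.sqrt δ * Real.sqrt (T.Q bcu bcu) ≤ (ε/S) * Real.sqrt (T.Q bcu bcu) :=
        mul_le_mul_of_nonneg_right hsδ (Real.sqrt_nonneg _)
      have hb2 : Real.sqrt (2 + 2 * T.Q bu bu) * Real.sqrt δ
          ≤ Real.sqrt (2 + 2 * T.Q bu bu) * (ε/S) :=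
        mul_le_mul_of_nonneg_left hsδ (Real.sqrt_nonneg _)
      have hSm : Real.sqrt (T.Q bcu bcu) + Real.sqrt (2 + 2 * T.Q bu bu) = S - 1 := by
        rw [hS]; ring
      calc |T.Q bu bcu| ≤ |T.Q (bu - fB) bcu| + |T.Q fB (bcu - fBc)| := htr
        _ ≤ (ε/S) * Real.sqrt (T.Q bcu bcu) + Real.sqrt (2 + 2 * T.Q bu bu) * (ε/S) := by
            linarith [d1, d2, hb1, hb2]
        _ = (ε/S) * (Real.sqrt (T.Q bcu bcu) + Real.sqrt (2 + 2 * T.Q bu bu)) := by ring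
        _ = (ε/S) * (S - 1) := by rw [hSm]
    have hlt : (ε/S) * (S - 1) < ε := by
      have h1 : (ε/S) * (S - 1) = ε - ε/S := by field_simp
      have h2 : 0 < ε / S := by positivity
      linarith
    linarith
  by_contra hne
  have := habs |T.Q bu bcu| (abs_pos.mpr hne)
  exact lt_irrefl _ this

end Core2

end Aux

/-- (a) a `Q_A`-invariant subset of a `Q`-invariant set `A` is `Q`-invariant;
(b) for `B` `Q`-invariant and `A` measurable, `A ∩ B` is `Q_A`-invariant in the explicit
sense. -/
theorem invariance_transfer {μ : Measure X} (T : WideForm μ)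
    (G : ℝ → Lp ℝ 2 μ →L[ℝ] Lp ℝ 2 μ) (hG : T.IsResolvent G) :
    (∀ A : Set X, ResInvariant G A →
      ∀ T' : WideForm μ,
        (T'.dom : Set (Lp ℝ 2 μ)) = {u | u ∈ T.dom ∧ indMul Aᶜ u = 0} →
        (∀ u v, T'.Q u v = T.Q u v) →
        ∀ G' : ℝ → Lp ℝ 2 μ →L[ℝ] Lp ℝ 2 μ, T'.IsResolvent G' →
        ∀ B : Set X, B ⊆ A → ResInvariant G' B → ResInvariant G B) ∧
    (∀ A B : Set X, MeasurableSet A → ResInvariant G B →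
      ∀ T' : WideForm μ,
        (T'.dom : Set (Lp ℝ 2 μ)) = {u | u ∈ T.dom ∧ indMul Aᶜ u = 0} →
        (∀ u v, T'.Q u v = T.Q u v) →
        ∀ g ∈ T'.dom, indMul (A ∩ B) g ∈ T'.dom ∧ indMul (A \ B) g ∈ T'.dom ∧
          T'.Q (indMul (A ∩ B) g) (indMul (A \ B) g) = 0) := by
  constructor
  · -- part (a)
    intro A hA T' hdom' hQ' G' hG' B hBsubA hB'
    have hdomiff : ∀ x : Lp ℝ 2 μ, x ∈ T'.dom ↔ (x ∈ T.dom ∧ indMul Aᶜ x = 0) := by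
      intro x
      rw [← SetLike.mem_coe, hdom']
      exact Iff.rfl
    have hAm := hA.1
    have hBm := hB'.1
    refine ⟨hBm, ?_⟩
    intro α hα f
    have step1 : ∀ h : Lp ℝ 2 μ, G' α (indMul A h) = G α (indMul A h) := by
      intro h
      have hmem2 : G α (indMul A h) ∈ T'.dom := by
        rw [hdomiff]
        refine ⟨(hG α hα _).1, ?_⟩
        rw [hA.2 α hα h, indMul_indMul hAm.compl hAm, Set.compl_inter_self, indMul_empty]
      apply res_unique T' hα ((hG' α hα _).1) hmem2
      intro v hv
      have hv' : v ∈ T.dom := ((hdomiff v).1 hv).1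
      have e1 := (hG' α hα (indMul A h)).2 v hv
      have e2 := (hG α hα (indMul A h)).2 v hv'
      rw [hQ' (G α (indMul A h)) v]
      linarith [e1, e2]
    have c1 : indMul B f = indMul A (indMul B f) := by
      rw [indMul_indMul hAm hBm, Set.inter_eq_right.mpr hBsubA]
    have c2 : indMul B f = indMul B (indMul A f) := by
      rw [indMul_indMul hBm hAm, Set.inter_eq_left.mpr hBsubA]
    calc G α (indMul B f)
        = G α (indMul A (indMul B f)) := by rw [← c1]
      _ = G' α (indMul A (indMul B f)) := (step1 _).symm
      _ = G' α (indMul B f) := by rw [← c1]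
      _ = G' α (indMul B (indMul A f)) := by rw [← c2]
      _ = indMul B (G' α (indMul A f)) := hB'.2 α hα _
      _ = indMul B (G α (indMul A f)) := by rw [step1]
      _ = indMul B (indMul A (G α f)) := by rw [hA.2 α hα f]
      _ = indMul (B ∩ A) (G α f) := indMul_indMul hBm hAm _
      _ = indMul B (G α f) := by rw [Set.inter_eq_left.mpr hBsubA]
  · -- part (b)
    intro A B hAm hB T' hdom' hQ' g hg
    have hdomiff : ∀ x : Lp ℝ 2 μ, x ∈ T'.dom ↔ (x ∈ T.dom ∧ indMul Aᶜ x = 0) := by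
      intro x
      rw [← SetLike.mem_coe, hdom']
      exact Iff.rfl
    obtain ⟨hgT, hgA⟩ := (hdomiff g).1 hg
    have hBm := hB.1
    have hgid : indMul A g = g := by
      have h := indMul_add_compl hAm g
      rw [hgA, add_zero] at h
      exact h
    obtain ⟨hmB, hmBc, hQ0⟩ := invariant_core hG hB hgT
    have e1 : indMul (A ∩ B) g = indMul B g := by
      rw [Set.inter_comm, ← indMul_indMul hBm hAm, hgid]
    have e2 : indMul (A \ B) g = indMul Bᶜ g := by
      rw [Set.diff_eq, Set.inter_comm, ← indMul_indMul hBm.compl hAm, hgid]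
    refine ⟨?_, ?_, ?_⟩
    · rw [e1]
      refine (hdomiff _).2 ⟨hmB, ?_⟩
      rw [indMul_indMul hAm.compl hBm, Set.inter_comm, ← indMul_indMul hBm hAm.compl,
        hgA, indMul_zero]
    · rw [e2]
      refine (hdomiff _).2 ⟨hmBc, ?_⟩
      rw [indMul_indMul hAm.compl hBm.compl, Set.inter_comm,
        ← indMul_indMul hBm.compl hAm.compl, hgA, indMul_zero]
    · rw [e1, e2, hQ']
      exact hQ0
end
end
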